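/- arXiv:1403.7733 — 2 statements merged into one kernel-verified Lean document; each statement's English description precedes it below -/
import Mathlib

section
/- Let Ω be a fat theta obtained from graphs H1, H2, H3 with distinguished distinct vertices x_i, y_i ∈ V(H_i): Γ is obtained by identifying x1, x2, x3 to a vertex x and y1, y2, y3 to a vertex y, and a cycle is balanced iff its edge set lies entirely within one H_i. Let H be the graph obtained from H1, H2, H3 by identifying y_i with x_{i+1} (indices mod 3). Then F(Ω) = M(H). -/
set_option linter.unusedSectionVars false
set_option maxHeartbeats 1000000


/-- A multigraph on vertex type `V` with edge type `E`: each edge has an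
unordered pair of endpoints (possibly equal, giving a loop). -/
structure Multigraph (V E : Type) where
  ends : E → Sym2 V

namespace Multigraph

variable {V E : Type} [Fintype V] [DecidableEq V] [Fintype E] [DecidableEq E]

/-- The vertices incident with some edge of `C`. -/
def vertsOf (G : Multigraph V E) (C : Finset E) : Finset V :=
  Finset.univ.filter fun v => ∃ e ∈ C, v ∈ G.ends e

/-- Degree of `v` in the subgraph with edge set `C`; loops count twice. -/
def deg (G : Multigraph V E) (C : Finset E) (v : V) : ℕ :=
  ∑ e ∈ C, (if G.ends e = Sym2.diag v then 2 else if v ∈ G.ends e then 1 else 0)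

/-- Reachability using only edges in `C`. -/
def ReachE (G : Multigraph V E) (C : Finset E) (u w : V) : Prop :=
  Relation.ReflTransGen (fun a b => ∃ e ∈ C, a ∈ G.ends e ∧ b ∈ G.ends e) u w

/-- The subgraph with edge set `C` is connected. -/
def ConnectedOn (G : Multigraph V E) (C : Finset E) : Prop :=
  ∀ u ∈ G.vertsOf C, ∀ w ∈ G.vertsOf C, G.ReachE C u w

/-- `C` is the edge set of a cycle of `G`. -/
def IsCycle (G : Multigraph V E) (C : Finset E) : Prop :=
  C.Nonempty ∧ G.ConnectedOn C ∧ ∀ v ∈ G.vertsOf C, G.deg C v = 2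

/-- `P` is the edge set of a path of `G` from `u` to `w` (of positive length). -/
def IsPath (G : Multigraph V E) (P : Finset E) (u w : V) : Prop :=
  u ≠ w ∧ G.ConnectedOn P ∧ u ∈ G.vertsOf P ∧ w ∈ G.vertsOf P ∧
    G.deg P u = 1 ∧ G.deg P w = 1 ∧
    ∀ v ∈ G.vertsOf P, v ≠ u → v ≠ w → G.deg P v = 2

/-- Theta data: three internally disjoint `u`–`w` paths. -/
def ThetaData (G : Multigraph V E) (P₁ P₂ P₃ : Finset E) (u w : V) : Prop :=
  G.IsPath P₁ u w ∧ G.IsPath P₂ u w ∧ G.IsPath P₃ u w ∧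
    Disjoint P₁ P₂ ∧ Disjoint P₁ P₃ ∧ Disjoint P₂ P₃ ∧
    G.vertsOf P₁ ∩ G.vertsOf P₂ = {u, w} ∧
    G.vertsOf P₁ ∩ G.vertsOf P₃ = {u, w} ∧
    G.vertsOf P₂ ∩ G.vertsOf P₃ = {u, w}

/-- `T` is the edge set of a theta subgraph of `G`. -/
def IsTheta (G : Multigraph V E) (T : Finset E) : Prop :=
  ∃ u w P₁ P₂ P₃, G.ThetaData P₁ P₂ P₃ u w ∧ T = P₁ ∪ P₂ ∪ P₃

/-- The theta property: no theta subgraph contains exactly two balanced cycles. -/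
def ThetaProperty (G : Multigraph V E) (B : Set (Finset E)) : Prop :=
  ∀ u w P₁ P₂ P₃, G.ThetaData P₁ P₂ P₃ u w →
    ¬ ((P₁ ∪ P₂ ∈ B ∧ P₁ ∪ P₃ ∈ B ∧ P₂ ∪ P₃ ∉ B) ∨
       (P₁ ∪ P₂ ∈ B ∧ P₁ ∪ P₃ ∉ B ∧ P₂ ∪ P₃ ∈ B) ∨
       (P₁ ∪ P₂ ∉ B ∧ P₁ ∪ P₃ ∈ B ∧ P₂ ∪ P₃ ∈ B))

/-- `(G, B)` is a biased graph. -/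
def IsBiased (G : Multigraph V E) (B : Set (Finset E)) : Prop :=
  (∀ C ∈ B, G.IsCycle C) ∧ G.ThetaProperty B

/-- A tight handcuff: two edge-disjoint cycles meeting in exactly one vertex. -/
def TightHandcuff (G : Multigraph V E) (C₁ C₂ : Finset E) : Prop :=
  G.IsCycle C₁ ∧ G.IsCycle C₂ ∧ Disjoint C₁ C₂ ∧
    (G.vertsOf C₁ ∩ G.vertsOf C₂).card = 1

/-- A loose handcuff: two vertex-disjoint cycles joined by a path meeting them
only in its endpoints. -/
def LooseHandcuff (G : Multigraph V E) (C₁ C₂ P : Finset E) : Prop :=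
  G.IsCycle C₁ ∧ G.IsCycle C₂ ∧ Disjoint (G.vertsOf C₁) (G.vertsOf C₂) ∧
    Disjoint P C₁ ∧ Disjoint P C₂ ∧
    ∃ u₁ u₂, G.IsPath P u₁ u₂ ∧ u₁ ∈ G.vertsOf C₁ ∧ u₂ ∈ G.vertsOf C₂ ∧
      G.vertsOf P ∩ G.vertsOf C₁ = {u₁} ∧ G.vertsOf P ∩ G.vertsOf C₂ = {u₂}

/-- Circuits of the frame matroid of the biased graph `(G, B)`. -/
def FrameCircuit (G : Multigraph V E) (B : Set (Finset E)) (C : Finset E) : Prop :=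
  (G.IsCycle C ∧ C ∈ B) ∨
  (∃ C₁ C₂, G.TightHandcuff C₁ C₂ ∧ C₁ ∉ B ∧ C₂ ∉ B ∧ C = C₁ ∪ C₂) ∨
  (∃ C₁ C₂ P, G.LooseHandcuff C₁ C₂ P ∧ C₁ ∉ B ∧ C₂ ∉ B ∧ C = C₁ ∪ C₂ ∪ P) ∨
  (G.IsTheta C ∧ ∀ D ⊆ C, G.IsCycle D → D ∉ B)

/-- The balanced cycles of a signed graph `(G, σ)`. -/
def balancedCycles (G : Multigraph V E) (σ : E → ℤˣ) : Set (Finset E) :=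
  {C | G.IsCycle C ∧ ∏ e ∈ C, σ e = 1}

/-- Circuits of the frame matroid of a signed graph. -/
def SFrameCircuit (G : Multigraph V E) (σ : E → ℤˣ) (C : Finset E) : Prop :=
  G.FrameCircuit (G.balancedCycles σ) C

/-- Circuits of the lift matroid of a signed graph. -/
def LiftCircuit (G : Multigraph V E) (σ : E → ℤˣ) (C : Finset E) : Prop :=
  (G.IsCycle C ∧ ∏ e ∈ C, σ e = 1) ∨
  (∃ C₁ C₂, G.IsCycle C₁ ∧ G.IsCycle C₂ ∧
    (∏ e ∈ C₁, σ e) = -1 ∧ (∏ e ∈ C₂, σ e) = -1 ∧ Disjoint C₁ C₂ ∧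
    (G.vertsOf C₁ ∩ G.vertsOf C₂).card ≤ 1 ∧ C = C₁ ∪ C₂)

/-- The sign of edge `e` after switching at the vertex labelling `δ`. -/
def switchSign (G : Multigraph V E) (σ : E → ℤˣ) (δ : V → ℤˣ) (e : E) : ℤˣ :=
  Sym2.lift ⟨fun a b => δ a * δ b, fun a b => mul_comm _ _⟩ (G.ends e) * σ e

/-- Reachability avoiding the vertex set `X`. -/
def ReachAvoiding (G : Multigraph V E) (X : Set V) (u w : V) : Prop :=
  Relation.ReflTransGen
    (fun a b => a ∉ X ∧ b ∉ X ∧ ∃ e, a ∈ G.ends e ∧ b ∈ G.ends e) u w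

/-- `G` is 2-connected. -/
def TwoConnected (G : Multigraph V E) : Prop :=
  3 ≤ Fintype.card V ∧ (∀ u w, G.ReachAvoiding ∅ u w) ∧
    ∀ v u w, u ≠ v → w ≠ v → G.ReachAvoiding {v} u w

/-- `G` is 3-connected. -/
def ThreeConnected (G : Multigraph V E) : Prop :=
  4 ≤ Fintype.card V ∧ (∀ u w, G.ReachAvoiding ∅ u w) ∧
    (∀ v u w, u ≠ v → w ≠ v → G.ReachAvoiding {v} u w) ∧
    ∀ v v' u w, u ∉ ({v, v'} : Set V) → w ∉ ({v, v'} : Set V) →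
      G.ReachAvoiding {v, v'} u w

/-- `v` is a cut-vertex of `G`. -/
def CutVertex (G : Multigraph V E) (v : V) : Prop :=
  ∃ u w, u ≠ v ∧ w ≠ v ∧ G.ReachAvoiding ∅ u w ∧ ¬ G.ReachAvoiding {v} u w

/-- `B` is (the edge set of) a block of `G`: an equivalence class of the
relation "lying on a common cycle". -/
def IsBlock (G : Multigraph V E) (B : Finset E) : Prop :=
  ∃ e, (B : Set E) = {f | f = e ∨ ∃ C, G.IsCycle C ∧ e ∈ C ∧ f ∈ C}

/-- An end-block: a block containing at most one cut-vertex. -/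
def EndBlock (G : Multigraph V E) (B : Finset E) : Prop :=
  G.IsBlock B ∧ ∀ a ∈ G.vertsOf B, ∀ b ∈ G.vertsOf B,
    G.CutVertex a → G.CutVertex b → a = b

end Multigraph

/-- Independence for a set system of circuits. -/
def MIndep {E : Type} (Circuits : Set (Finset E)) (X : Finset E) : Prop :=
  ∀ C ∈ Circuits, ¬ C ⊆ X

/-- The matroid with the given circuits is connected. -/
def MConnected {E : Type} (Circuits : Set (Finset E)) : Prop :=
  ∀ e f : E, e ≠ f → ∃ C ∈ Circuits, e ∈ C ∧ f ∈ C

/-- The matroid with the given circuits is binary (representable over GF(2)). -/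
def MBinary {E : Type} [Fintype E] [DecidableEq E] (Circuits : Set (Finset E)) : Prop :=
  ∃ (n : ℕ) (φ : E → (Fin n → ZMod 2)), ∀ X : Finset E,
    MIndep Circuits X ↔ LinearIndependent (ZMod 2) (fun e : {x // x ∈ X} => φ e.1)


variable {V E : Type} [Fintype V] [DecidableEq V] [Fintype E] [DecidableEq E]


section Aux
open Multigraph Finset

/-- per-edge degree contribution -/
def cnt (G : Multigraph V E) (e : E) (v : V) : ℕ :=
  if G.ends e = Sym2.diag v then 2 else if v ∈ G.ends e then 1 else 0

lemma deg_eq_sum_cnt (G : Multigraph V E) (C : Finset E) (v : V) :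
    G.deg C v = ∑ e ∈ C, cnt G e v := rfl

lemma cnt_pos_iff (G : Multigraph V E) (e : E) (v : V) :
    0 < cnt G e v ↔ v ∈ G.ends e := by
  unfold cnt
  split_ifs with h1 h2 <;> simp_all
  simp [Sym2.diag]

lemma mem_vertsOf_iff (G : Multigraph V E) (C : Finset E) (v : V) :
    v ∈ G.vertsOf C ↔ ∃ e ∈ C, v ∈ G.ends e := by
  simp [vertsOf]

lemma deg_pos_iff (G : Multigraph V E) (C : Finset E) (v : V) :
    0 < G.deg C v ↔ v ∈ G.vertsOf C := by
  rw [deg_eq_sum_cnt, mem_vertsOf_iff]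
  constructor
  · intro h
    obtain ⟨e, he, hpos⟩ := Finset.exists_ne_zero_of_sum_ne_zero (by omega : (∑ e ∈ C, cnt G e v) ≠ 0)
    exact ⟨e, he, (cnt_pos_iff G e v).mp (Nat.pos_of_ne_zero hpos)⟩
  · rintro ⟨e, he, hv⟩
    calc 0 < cnt G e v := (cnt_pos_iff G e v).mpr hv
    _ ≤ ∑ e ∈ C, cnt G e v := Finset.single_le_sum (f := fun e => cnt G e v)
        (fun _ _ => Nat.zero_le _) he

lemma deg_mono (G : Multigraph V E) {D C : Finset E} (h : D ⊆ C) (v : V) :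
    G.deg D v ≤ G.deg C v :=
  Finset.sum_le_sum_of_subset h

lemma deg_union (G : Multigraph V E) {D C : Finset E} (h : Disjoint D C) (v : V) :
    G.deg (D ∪ C) v = G.deg D v + G.deg C v :=
  Finset.sum_union h

lemma vertsOf_union (G : Multigraph V E) (D C : Finset E) :
    G.vertsOf (D ∪ C) = G.vertsOf D ∪ G.vertsOf C := by
  ext v
  simp only [mem_vertsOf_iff, Finset.mem_union]
  aesop

lemma vertsOf_mono (G : Multigraph V E) {D C : Finset E} (h : D ⊆ C) :
    G.vertsOf D ⊆ G.vertsOf C := by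
  intro v hv
  rw [mem_vertsOf_iff] at *
  obtain ⟨e, he, hv⟩ := hv
  exact ⟨e, h he, hv⟩

lemma diag_mk {α : Type*} (v : α) : Sym2.diag v = s(v, v) := rfl

lemma sum_cnt (G : Multigraph V E) (e : E) : ∑ v, cnt G e v = 2 := by
  unfold cnt
  induction G.ends e using Sym2.ind with
  | _ a b =>
    have key : ∀ v : V, (if s(a, b) = Sym2.diag v then 2 else
        if v ∈ s(a, b) then 1 else 0) =
        (if v = a then 1 else 0) + (if v = b then 1 else 0) := by
      intro v
      simp only [diag_mk, Sym2.eq_iff, Sym2.mem_iff]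
      by_cases hva : v = a <;> by_cases hvb : v = b <;>
        simp_all <;> first | tauto | (intro h; simp_all)
    rw [Finset.sum_congr rfl (fun v _ => key v), Finset.sum_add_distrib]
    simp

lemma handshake (G : Multigraph V E) (C : Finset E) :
    ∑ v, G.deg C v = 2 * C.card := by
  simp only [deg_eq_sum_cnt]
  rw [Finset.sum_comm]
  rw [Finset.sum_congr rfl (fun e _ => sum_cnt G e), Finset.sum_const]
  ring

lemma reachE_symm (G : Multigraph V E) {C : Finset E} {u w : V}
    (h : G.ReachE C u w) : G.ReachE C w u := by
  induction h with
  | refl => exact Relation.ReflTransGen.refl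
  | tail _ hstep ih =>
    obtain ⟨e, he, ha, hb⟩ := hstep
    exact Relation.ReflTransGen.trans (Relation.ReflTransGen.single ⟨e, he, hb, ha⟩) ih

lemma reachE_mono (G : Multigraph V E) {D C : Finset E} (h : D ⊆ C) {u w : V}
    (hr : G.ReachE D u w) : G.ReachE C u w := by
  refine Relation.ReflTransGen.mono ?_ _ _ hr
  rintro a b ⟨e, he, ha, hb⟩
  exact ⟨e, h he, ha, hb⟩

/-- Closure/crossing lemma: in a connected edge set, a nonempty proper subset
shares a vertex with its complement. -/
lemma crossing (G : Multigraph V E) {C D : Finset E}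
    (hconn : G.ConnectedOn C) (hDC : D ⊆ C) (hD : D.Nonempty)
    (hCD : (C \ D).Nonempty) :
    ∃ v e f, e ∈ D ∧ f ∈ C \ D ∧ v ∈ G.ends e ∧ v ∈ G.ends f := by
  obtain ⟨e₀, he₀⟩ := hD
  obtain ⟨f₀, hf₀⟩ := hCD
  obtain ⟨v₀, hv₀⟩ : ∃ v, v ∈ G.ends e₀ := ⟨(G.ends e₀).out.1, Sym2.out_fst_mem _⟩
  obtain ⟨u₀, hu₀⟩ : ∃ v, v ∈ G.ends f₀ := ⟨(G.ends f₀).out.1, Sym2.out_fst_mem _⟩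
  have hv₀C : v₀ ∈ G.vertsOf C := (mem_vertsOf_iff _ _ _).mpr ⟨e₀, hDC he₀, hv₀⟩
  have hu₀C : u₀ ∈ G.vertsOf C :=
    (mem_vertsOf_iff _ _ _).mpr ⟨f₀, (Finset.mem_sdiff.mp hf₀).1, hu₀⟩
  have hreach := hconn v₀ hv₀C u₀ hu₀C
  have key : ∀ a b : V, G.ReachE C a b → a ∈ G.vertsOf D →
      b ∈ G.vertsOf D ∨ ∃ v e f, e ∈ D ∧ f ∈ C \ D ∧ v ∈ G.ends e ∧ v ∈ G.ends f := by
    intro a b h ha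
    induction h with
    | refl => exact Or.inl ha
    | tail _ hstep ih =>
      rcases ih with hmid | hfound
      · obtain ⟨g, hg, h1, h2⟩ := hstep
        by_cases hgD : g ∈ D
        · exact Or.inl ((mem_vertsOf_iff _ _ _).mpr ⟨g, hgD, h2⟩)
        · obtain ⟨e, heD, hve⟩ := (mem_vertsOf_iff _ _ _).mp hmid
          exact Or.inr ⟨_, e, g, heD, Finset.mem_sdiff.mpr ⟨hg, hgD⟩, hve, h1⟩
      · exact Or.inr hfound
  rcases key v₀ u₀ hreach ((mem_vertsOf_iff _ _ _).mpr ⟨e₀, he₀, hv₀⟩) with hin | hf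
  · obtain ⟨e, heD, hue⟩ := (mem_vertsOf_iff _ _ _).mp hin
    exact ⟨u₀, e, f₀, heD, hf₀, hue, hu₀⟩
  · exact hf

end Aux


section MapAux
open Multigraph Finset

/-- The vertex renaming used to build `H` from `Γ`, for an edge of part `i`. -/
def Phi (x y : V) (i : Fin 3) (u : V) : V ⊕ Fin 3 :=
  if u = y then Sum.inr i else if u = x then Sum.inr (i - 1) else Sum.inl u

lemma fin3_sub_one_ne : ∀ j : Fin 3, j - 1 ≠ j := by decide

lemma fin3_sub_eq_iff : ∀ p j : Fin 3, p - 1 = j ↔ p = j + 1 := by decide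

lemma Phi_inj {x y : V} (hxy : x ≠ y) (i : Fin 3) : Function.Injective (Phi x y i) := by
  intro a b hab
  unfold Phi at hab
  split_ifs at hab with h1 h2 h3 h4 h5 h6 h7 h8 <;> simp_all <;>
    first
      | exact absurd hab (fin3_sub_one_ne i).symm
      | exact absurd hab (fin3_sub_one_ne i)
      | exact absurd hab.symm (fin3_sub_one_ne i)

lemma cnt_eq_zero (G : Multigraph V E) {e : E} {v : V} (h : v ∉ G.ends e) :
    cnt G e v = 0 := by
  unfold cnt
  rw [if_neg, if_neg h]
  intro hd
  exact h (hd ▸ (by simp [diag_mk] : v ∈ Sym2.diag v))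

lemma map_eq_diag_iff {α β : Type*} {f : α → β} (hf : Function.Injective f)
    (s : Sym2 α) (u : α) : Sym2.map f s = Sym2.diag (f u) ↔ s = Sym2.diag u := by
  induction s using Sym2.ind with
  | _ a b =>
    simp only [Sym2.map_pair_eq, diag_mk, Sym2.eq_iff]
    constructor
    · rintro (⟨h1, h2⟩ | ⟨h1, h2⟩) <;> exact Or.inl ⟨hf h1, hf h2⟩
    · rintro (⟨rfl, rfl⟩ | ⟨rfl, rfl⟩) <;> simp

lemma mem_map_iff {α β : Type*} {f : α → β} (hf : Function.Injective f)
    (s : Sym2 α) (u : α) : f u ∈ Sym2.map f s ↔ u ∈ s := by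
  rw [Sym2.mem_map]
  constructor
  · rintro ⟨w, hw, hwu⟩
    exact hf hwu ▸ hw
  · intro h
    exact ⟨u, h, rfl⟩

lemma map_mem_ends {Γ : Multigraph V E} {x y : V} {part : E → Fin 3}
    {H : Multigraph (V ⊕ Fin 3) E}
    (hH : ∀ e, H.ends e = Sym2.map
      (fun u => if u = y then Sum.inr (part e)
        else if u = x then Sum.inr (part e - 1) else Sum.inl u) (Γ.ends e))
    (e : E) (v' : V ⊕ Fin 3) :
    v' ∈ H.ends e ↔ ∃ u ∈ Γ.ends e, Phi x y (part e) u = v' := by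
  rw [hH e]
  rw [show (fun u => if u = y then Sum.inr (part e)
        else if u = x then Sum.inr (part e - 1) else Sum.inl u) = Phi x y (part e) from rfl]
  exact Sym2.mem_map

lemma cnt_H_phi {Γ : Multigraph V E} {x y : V} (hxy : x ≠ y) {part : E → Fin 3}
    {H : Multigraph (V ⊕ Fin 3) E}
    (hH : ∀ e, H.ends e = Sym2.map
      (fun u => if u = y then Sum.inr (part e)
        else if u = x then Sum.inr (part e - 1) else Sum.inl u) (Γ.ends e))
    (e : E) (u : V) :
    cnt H e (Phi x y (part e) u) = cnt Γ e u := by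
  have hinj := Phi_inj hxy (part e)
  have hmap : H.ends e = Sym2.map (Phi x y (part e)) (Γ.ends e) := hH e
  have hdiag : H.ends e = Sym2.diag (Phi x y (part e) u) ↔ Γ.ends e = Sym2.diag u := by
    rw [hmap]; exact map_eq_diag_iff hinj _ u
  have hmem : Phi x y (part e) u ∈ H.ends e ↔ u ∈ Γ.ends e := by
    rw [hmap]; exact mem_map_iff hinj _ u
  unfold cnt
  by_cases hd : Γ.ends e = Sym2.diag u
  · rw [if_pos (hdiag.mpr hd), if_pos hd]
  · rw [if_neg (fun h => hd (hdiag.mp h)), if_neg hd]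
    by_cases hm : u ∈ Γ.ends e
    · rw [if_pos (hmem.mpr hm), if_pos hm]
    · rw [if_neg (fun h => hm (hmem.mp h)), if_neg hm]

lemma cnt_H_inl_x {Γ : Multigraph V E} {x y : V} {part : E → Fin 3}
    {H : Multigraph (V ⊕ Fin 3) E}
    (hH : ∀ e, H.ends e = Sym2.map
      (fun u => if u = y then Sum.inr (part e)
        else if u = x then Sum.inr (part e - 1) else Sum.inl u) (Γ.ends e))
    (e : E) {u : V} (h : u = x ∨ u = y) :
    cnt H e (Sum.inl u) = 0 := by
  apply cnt_eq_zero
  rw [map_mem_ends hH]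
  rintro ⟨w, hw, hwu⟩
  unfold Phi at hwu
  split_ifs at hwu <;> simp_all

lemma cnt_H_inl {Γ : Multigraph V E} {x y : V} (hxy : x ≠ y) {part : E → Fin 3}
    {H : Multigraph (V ⊕ Fin 3) E}
    (hH : ∀ e, H.ends e = Sym2.map
      (fun u => if u = y then Sum.inr (part e)
        else if u = x then Sum.inr (part e - 1) else Sum.inl u) (Γ.ends e))
    (e : E) {u : V} (hux : u ≠ x) (huy : u ≠ y) :
    cnt H e (Sum.inl u) = cnt Γ e u := by
  have h := cnt_H_phi hxy hH e u
  unfold Phi at h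
  rwa [if_neg huy, if_neg hux] at h

lemma cnt_H_inr {Γ : Multigraph V E} {x y : V} (hxy : x ≠ y) {part : E → Fin 3}
    {H : Multigraph (V ⊕ Fin 3) E}
    (hH : ∀ e, H.ends e = Sym2.map
      (fun u => if u = y then Sum.inr (part e)
        else if u = x then Sum.inr (part e - 1) else Sum.inl u) (Γ.ends e))
    (e : E) (j : Fin 3) :
    cnt H e (Sum.inr j) =
      if part e = j then cnt Γ e y else if part e = j + 1 then cnt Γ e x else 0 := by
  by_cases h1 : part e = j
  · rw [if_pos h1]
    have h := cnt_H_phi hxy hH e y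
    unfold Phi at h
    rw [if_pos rfl, h1] at h
    exact h
  · rw [if_neg h1]
    by_cases h2 : part e = j + 1
    · rw [if_pos h2]
      have h := cnt_H_phi hxy hH e x
      unfold Phi at h
      rw [if_neg hxy, if_pos rfl, (fin3_sub_eq_iff (part e) j).mpr h2] at h
      exact h
    · rw [if_neg h2]
      apply cnt_eq_zero
      rw [map_mem_ends hH]
      rintro ⟨w, hw, hwu⟩
      unfold Phi at hwu
      split_ifs at hwu <;> simp_all
      exact h2 ((fin3_sub_eq_iff (part e) j).mp hwu)

end MapAux


section Ctx
open Multigraph Finset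

lemma fin3_ne_add_one : ∀ j : Fin 3, j ≠ j + 1 := by decide

variable {Γ : Multigraph V E} {x y : V} {part : E → Fin 3} {H : Multigraph (V ⊕ Fin 3) E}

lemma Phi_eq_inl {i : Fin 3} {w u : V} :
    Phi x y i w = Sum.inl u ↔ w = u ∧ u ≠ x ∧ u ≠ y := by
  unfold Phi
  split_ifs with h1 h2 <;> simp_all
  rintro rfl
  exact ⟨h2, h1⟩

lemma Phi_eq_inr {i j : Fin 3} {w : V} (hxy : x ≠ y) :
    Phi x y i w = Sum.inr j ↔ (w = y ∧ i = j) ∨ (w = x ∧ w ≠ y ∧ i - 1 = j) := by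
  unfold Phi
  split_ifs with h1 h2 <;> constructor <;> intro h <;> simp_all

section WithH
variable (hxy : x ≠ y)
  (hH : ∀ e, H.ends e = Sym2.map
      (fun u => if u = y then Sum.inr (part e)
        else if u = x then Sum.inr (part e - 1) else Sum.inl u) (Γ.ends e))

include hxy hH

lemma deg_H_inl (C : Finset E) {u : V} (hux : u ≠ x) (huy : u ≠ y) :
    H.deg C (Sum.inl u) = Γ.deg C u := by
  simp only [deg_eq_sum_cnt]
  exact Finset.sum_congr rfl fun e _ => cnt_H_inl hxy hH e hux huy

omit hxy in
lemma deg_H_inl_zero (C : Finset E) {u : V} (h : u = x ∨ u = y) :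
    H.deg C (Sum.inl u) = 0 := by
  simp only [deg_eq_sum_cnt]
  exact Finset.sum_eq_zero fun e _ => cnt_H_inl_x hH e h

lemma deg_H_inr (C : Finset E) (j : Fin 3) :
    H.deg C (Sum.inr j) =
      Γ.deg (C.filter (fun e => part e = j)) y +
        Γ.deg (C.filter (fun e => part e = j + 1)) x := by
  simp only [deg_eq_sum_cnt]
  rw [Finset.sum_filter, Finset.sum_filter, ← Finset.sum_add_distrib]
  refine Finset.sum_congr rfl fun e _ => ?_
  rw [cnt_H_inr hxy hH e j]
  by_cases h1 : part e = j
  · have h2 : ¬ part e = j + 1 := fun h2 => fin3_ne_add_one j (h1.symm.trans h2)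
    simp [h1, h2]
  · by_cases h2 : part e = j + 1 <;> simp [h1, h2]

lemma mem_vertsOf_H_inl {C : Finset E} {u : V} :
    Sum.inl u ∈ H.vertsOf C ↔ u ∈ Γ.vertsOf C ∧ u ≠ x ∧ u ≠ y := by
  simp only [mem_vertsOf_iff]
  constructor
  · rintro ⟨e, he, hv⟩
    rw [map_mem_ends hH] at hv
    obtain ⟨w, hw, hwu⟩ := hv
    obtain ⟨rfl, hux, huy⟩ := Phi_eq_inl.mp hwu
    exact ⟨⟨e, he, hw⟩, hux, huy⟩
  · rintro ⟨⟨e, he, hv⟩, hux, huy⟩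
    refine ⟨e, he, ?_⟩
    rw [map_mem_ends hH]
    exact ⟨u, hv, Phi_eq_inl.mpr ⟨rfl, hux, huy⟩⟩

lemma reachE_lift {C : Finset E} {i : Fin 3} (hC : ∀ e ∈ C, part e = i) {a b : V}
    (h : Γ.ReachE C a b) : H.ReachE C (Phi x y i a) (Phi x y i b) := by
  induction h with
  | refl => exact Relation.ReflTransGen.refl
  | tail _ hstep ih =>
    obtain ⟨e, he, h1, h2⟩ := hstep
    refine ih.tail ⟨e, he, ?_, ?_⟩
    · rw [map_mem_ends hH]
      exact ⟨_, h1, by rw [hC e he]⟩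
    · rw [map_mem_ends hH]
      exact ⟨_, h2, by rw [hC e he]⟩

lemma reachE_descend {C : Finset E} {i : Fin 3} (hC : ∀ e ∈ C, part e = i)
    {v' w' : V ⊕ Fin 3} (h : H.ReachE C v' w') :
    ∀ a, Phi x y i a = v' → ∃ b, Phi x y i b = w' ∧ Γ.ReachE C a b := by
  induction h with
  | refl => exact fun a ha => ⟨a, ha, Relation.ReflTransGen.refl⟩
  | tail _ hstep ih =>
    intro a ha
    obtain ⟨m, hm, hreach⟩ := ih a ha
    obtain ⟨e, he, h1, h2⟩ := hstep
    rw [map_mem_ends hH] at h1 h2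
    obtain ⟨p, hp, hpm⟩ := h1
    obtain ⟨q, hq, hqm⟩ := h2
    rw [hC e he] at hpm hqm
    have hpm' : p = m := Phi_inj hxy i (hpm.trans hm.symm)
    exact ⟨q, hqm, hreach.tail ⟨e, he, hpm' ▸ hp, hq⟩⟩

end WithH
end Ctx


section Struct
open Multigraph Finset

lemma deg_eq_zero_of_not_mem (G : Multigraph V E) {C : Finset E} {v : V}
    (h : v ∉ G.vertsOf C) : G.deg C v = 0 := by
  by_contra hne
  exact h ((deg_pos_iff G C v).mp (Nat.pos_of_ne_zero hne))

lemma deg_pair_le (G : Multigraph V E) {e f : E} (hef : e ≠ f) {C : Finset E}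
    (he : e ∈ C) (hf : f ∈ C) {v : V} (hv1 : v ∈ G.ends e) (hv2 : v ∈ G.ends f) :
    2 ≤ G.deg C v := by
  have hsub : {e, f} ⊆ C := by
    intro g hg
    rcases Finset.mem_insert.mp hg with rfl | hg
    · exact he
    · exact Finset.mem_singleton.mp hg ▸ hf
  calc 2 = 1 + 1 := rfl
  _ ≤ cnt G e v + cnt G f v :=
      Nat.add_le_add ((cnt_pos_iff G e v).mpr hv1) ((cnt_pos_iff G f v).mpr hv2)
  _ = G.deg {e, f} v := by
      rw [deg_eq_sum_cnt, Finset.sum_insert (by simp [hef]), Finset.sum_singleton]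
  _ ≤ G.deg C v := deg_mono G hsub v

lemma deg_insert_le (G : Multigraph V E) {D C : Finset E} {f : E} (hD : D ⊆ C)
    (hf : f ∈ C) (hfD : f ∉ D) {v : V} (hv : v ∈ G.ends f) :
    G.deg D v + 1 ≤ G.deg C v := by
  have hsub : insert f D ⊆ C := Finset.insert_subset hf hD
  calc G.deg D v + 1 ≤ G.deg D v + cnt G f v :=
        Nat.add_le_add_left ((cnt_pos_iff G f v).mpr hv) _
  _ = G.deg (insert f D) v := by
      rw [deg_eq_sum_cnt, deg_eq_sum_cnt, Finset.sum_insert hfD]; omega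
  _ ≤ G.deg C v := deg_mono G hsub v

lemma isPath_symm (G : Multigraph V E) {P : Finset E} {u w : V}
    (h : G.IsPath P u w) : G.IsPath P w u := by
  obtain ⟨h1, h2, h3, h4, h5, h6, h7⟩ := h
  exact ⟨h1.symm, h2, h4, h3, h6, h5, fun v hv hvw hvu => h7 v hv hvu hvw⟩

lemma paths_union_cycle (G : Multigraph V E) {P₁ P₂ : Finset E} {u w : V}
    (h1 : G.IsPath P₁ u w) (h2 : G.IsPath P₂ u w) (hd : Disjoint P₁ P₂)
    (hv : G.vertsOf P₁ ∩ G.vertsOf P₂ = {u, w}) :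
    G.IsCycle (P₁ ∪ P₂) := by
  obtain ⟨huw, hc1, hu1, hw1, hdu1, hdw1, hi1⟩ := h1
  obtain ⟨-, hc2, hu2, hw2, hdu2, hdw2, hi2⟩ := h2
  refine ⟨?_, ?_, ?_⟩
  · obtain ⟨e, he, -⟩ := (mem_vertsOf_iff G P₁ u).mp hu1
    exact ⟨e, Finset.mem_union_left _ he⟩
  · have key : ∀ v ∈ G.vertsOf (P₁ ∪ P₂), G.ReachE (P₁ ∪ P₂) v u := by
      intro v hv'
      rw [vertsOf_union, Finset.mem_union] at hv'
      rcases hv' with h | h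
      · exact reachE_mono G Finset.subset_union_left (hc1 v h u hu1)
      · exact reachE_mono G Finset.subset_union_right (hc2 v h u hu2)
    intro a ha b hb
    exact (key a ha).trans (reachE_symm G (key b hb))
  · intro v hv'
    rw [deg_union G hd]
    rw [vertsOf_union, Finset.mem_union] at hv'
    rcases eq_or_ne v u with rfl | hvu
    · rw [hdu1, hdu2]
    rcases eq_or_ne v w with rfl | hvw
    · rw [hdw1, hdw2]
    rcases hv' with h | h
    · have hnv2 : v ∉ G.vertsOf P₂ := by
        intro h2'
        have : v ∈ ({u, w} : Finset V) := hv ▸ Finset.mem_inter.mpr ⟨h, h2'⟩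
        simp [hvu, hvw] at this
      rw [hi1 v h hvu hvw, deg_eq_zero_of_not_mem G hnv2]
    · have hnv1 : v ∉ G.vertsOf P₁ := by
        intro h1'
        have : v ∈ ({u, w} : Finset V) := hv ▸ Finset.mem_inter.mpr ⟨h1', h⟩
        simp [hvu, hvw] at this
      rw [hi2 v h hvu hvw, deg_eq_zero_of_not_mem G hnv1]

lemma no_cycle_sub_path (G : Multigraph V E) {P D : Finset E} {u w : V}
    (hP : G.IsPath P u w) (hDP : D ⊆ P) : ¬ G.IsCycle D := by
  rintro ⟨hne, hconn, hdeg⟩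
  obtain ⟨-, hPc, huP, hwP, hdu, hdw, hi⟩ := hP
  have hvD : ∀ v ∈ G.vertsOf D, G.deg P v = 2 := by
    intro v hv
    have h2 : 2 ≤ G.deg P v := (hdeg v hv) ▸ deg_mono G hDP v
    have hvP : v ∈ G.vertsOf P := vertsOf_mono G hDP hv
    rcases eq_or_ne v u with rfl | hvu
    · rw [hdu] at h2; omega
    rcases eq_or_ne v w with rfl | hvw
    · rw [hdw] at h2; omega
    exact hi v hvP hvu hvw
  by_cases hPD : (P \ D).Nonempty
  · obtain ⟨v, e, f, heD, hfPD, hv1, hv2⟩ := crossing G hPc hDP hne hPD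
    have hvD' : v ∈ G.vertsOf D := (mem_vertsOf_iff G D v).mpr ⟨e, heD, hv1⟩
    have h3 : G.deg D v + 1 ≤ G.deg P v :=
      deg_insert_le G hDP (Finset.mem_sdiff.mp hfPD).1 (Finset.mem_sdiff.mp hfPD).2 hv2
    rw [hdeg v hvD', hvD v hvD'] at h3
    omega
  · have hDP' : D = P := by
      apply Finset.Subset.antisymm hDP
      intro g hg
      by_contra hgD
      exact hPD ⟨g, Finset.mem_sdiff.mpr ⟨hg, hgD⟩⟩
    have h2 : G.deg P u = 2 := hvD u (hDP' ▸ huP)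
    rw [hdu] at h2
    omega

lemma even_deg_xy (G : Multigraph V E) {x y : V} (hxy : x ≠ y) (S : Finset E)
    (hev : ∀ v, v ≠ x → v ≠ y → Even (G.deg S v)) :
    Even (G.deg S x + G.deg S y) := by
  have hh := handshake G S
  have hsplit : ∑ v, G.deg S v =
      G.deg S x + G.deg S y + ∑ v ∈ (Finset.univ.erase x).erase y, G.deg S v := by
    rw [← Finset.add_sum_erase _ _ (Finset.mem_univ x)]
    rw [← Finset.add_sum_erase _ _ (Finset.mem_erase.mpr ⟨hxy.symm, Finset.mem_univ y⟩)]
    ring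
  have hrest : Even (∑ v ∈ (Finset.univ.erase x).erase y, G.deg S v) := by
    apply Finset.even_sum
    intro v hv
    rw [Finset.mem_erase, Finset.mem_erase] at hv
    exact hev v hv.2.1 hv.1
  obtain ⟨k, hk⟩ := hrest
  refine ⟨S.card - k, ?_⟩
  omega

end Struct


section Classes
open Multigraph Finset

variable {Γ : Multigraph V E} {x y : V} {part : E → Fin 3}
variable (hxy : x ≠ y)
variable (hsep : ∀ e f, part e ≠ part f →
      ∀ u : V, u ∈ Γ.ends e → u ∈ Γ.ends f → u = x ∨ u = y)

include hsep

lemma class_closed {C : Finset E} {i : Fin 3} {v : V} (hvx : v ≠ x) (hvy : v ≠ y)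
    (hv : v ∈ Γ.vertsOf (C.filter fun e => part e = i)) :
    Γ.deg (C.filter fun e => part e = i) v = Γ.deg C v := by
  obtain ⟨e, he, hve⟩ := (mem_vertsOf_iff _ _ _).mp hv
  rw [Finset.mem_filter] at he
  have hzero : Γ.deg (C.filter fun e => ¬ part e = i) v = 0 := by
    apply deg_eq_zero_of_not_mem
    intro hmem
    obtain ⟨f, hf, hvf⟩ := (mem_vertsOf_iff _ _ _).mp hmem
    rw [Finset.mem_filter] at hf
    rcases hsep e f (fun h => hf.2 (h ▸ he.2)) v hve hvf with h | h
    · exact hvx h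
    · exact hvy h
  have := deg_union Γ (Finset.disjoint_filter_filter_not C C (fun e => part e = i)) v
  rw [Finset.filter_union_filter_not_eq] at this
  omega

lemma class_lb {C : Finset E} {i : Fin 3} (hconn : Γ.ConnectedOn C)
    (hdeg : ∀ v ∈ Γ.vertsOf C, Γ.deg C v = 2)
    (hS : (C.filter fun e => part e = i).Nonempty)
    (hCS : (C \ C.filter fun e => part e = i).Nonempty) (hxy : x ≠ y) :
    2 ≤ Γ.deg (C.filter fun e => part e = i) x + Γ.deg (C.filter fun e => part e = i) y := by
  set S := C.filter fun e => part e = i with hSdef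
  have hcross := crossing Γ hconn (Finset.filter_subset _ C) hS hCS
  obtain ⟨v, e, f, heS, hfS, hv1, hv2⟩ := hcross
  have hfi : ¬ part f = i := by
    have := Finset.mem_sdiff.mp hfS
    intro h
    exact this.2 (Finset.mem_filter.mpr ⟨this.1, h⟩)
  have hei : part e = i := (Finset.mem_filter.mp heS).2
  have hvxy : v = x ∨ v = y := hsep e f (fun h => hfi (h ▸ hei)) v hv1 hv2
  have hpos : 1 ≤ Γ.deg S x + Γ.deg S y := by
    have h1 : 0 < Γ.deg S v := (deg_pos_iff _ _ _).mpr ((mem_vertsOf_iff _ _ _).mpr ⟨e, heS, hv1⟩)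
    rcases hvxy with rfl | rfl <;> omega
  have hev : Even (Γ.deg S x + Γ.deg S y) := by
    apply even_deg_xy Γ hxy
    intro v' hv'x hv'y
    by_cases hmem : v' ∈ Γ.vertsOf S
    · rw [class_closed hsep hv'x hv'y hmem]
      rw [hdeg v' (vertsOf_mono Γ (Finset.filter_subset _ C) hmem)]
      exact ⟨1, rfl⟩
    · rw [deg_eq_zero_of_not_mem Γ hmem]
      exact ⟨0, rfl⟩
  obtain ⟨k, hk⟩ := hev
  omega

/-- An unbalanced cycle passes through both `x` and `y`. -/
lemma cycle_mem_xy {C : Finset E} (hC : Γ.IsCycle C)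
    (hnb : ¬ ∃ i, ∀ e ∈ C, part e = i) (hxy : x ≠ y) :
    x ∈ Γ.vertsOf C ∧ y ∈ Γ.vertsOf C ∧ Γ.deg C x = 2 ∧ Γ.deg C y = 2 := by
  obtain ⟨hne, hconn, hdeg⟩ := hC
  obtain ⟨e₀, he₀⟩ := hne
  push_neg at hnb
  obtain ⟨f₀, hf₀, hf₀i⟩ := hnb (part e₀)
  set i := part e₀
  set j := part f₀
  set Si := C.filter fun e => part e = i with hSi
  set Sj := C.filter fun e => part e = j with hSj
  have hSine : Si.Nonempty := ⟨e₀, Finset.mem_filter.mpr ⟨he₀, rfl⟩⟩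
  have hSjne : Sj.Nonempty := ⟨f₀, Finset.mem_filter.mpr ⟨hf₀, rfl⟩⟩
  have hCSi : (C \ Si).Nonempty :=
    ⟨f₀, Finset.mem_sdiff.mpr ⟨hf₀, fun h => hf₀i (Finset.mem_filter.mp h).2⟩⟩
  have hCSj : (C \ Sj).Nonempty :=
    ⟨e₀, Finset.mem_sdiff.mpr ⟨he₀, fun h => hf₀i ((Finset.mem_filter.mp h).2).symm⟩⟩
  have hi2 := class_lb hsep hconn hdeg hSine hCSi hxy
  have hj2 := class_lb hsep hconn hdeg hSjne hCSj hxy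
  rw [← hSi] at hi2
  rw [← hSj] at hj2
  have hdisj : Disjoint Si Sj := by
    rw [Finset.disjoint_left]
    intro g hgi hgj
    exact hf₀i ((Finset.mem_filter.mp hgj).2.symm.trans (Finset.mem_filter.mp hgi).2)
  have hsub : Si ∪ Sj ⊆ C := Finset.union_subset (Finset.filter_subset _ _) (Finset.filter_subset _ _)
  have hx' : Γ.deg Si x + Γ.deg Sj x ≤ Γ.deg C x := by
    rw [← deg_union Γ hdisj]
    exact deg_mono Γ hsub x
  have hy' : Γ.deg Si y + Γ.deg Sj y ≤ Γ.deg C y := by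
    rw [← deg_union Γ hdisj]
    exact deg_mono Γ hsub y
  have hxle : Γ.deg C x ≤ 2 := by
    by_cases h : x ∈ Γ.vertsOf C
    · exact (hdeg x h).le
    · rw [deg_eq_zero_of_not_mem Γ h]; omega
  have hyle : Γ.deg C y ≤ 2 := by
    by_cases h : y ∈ Γ.vertsOf C
    · exact (hdeg y h).le
    · rw [deg_eq_zero_of_not_mem Γ h]; omega
  have hxv : 0 < Γ.deg C x := by omega
  have hyv : 0 < Γ.deg C y := by omega
  exact ⟨(deg_pos_iff _ _ _).mp hxv, (deg_pos_iff _ _ _).mp hyv, by omega, by omega⟩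

/-- A path from `x` to `y` lies within a single part. -/
lemma path_single_part {P : Finset E} (hP : Γ.IsPath P x y) :
    ∃ i, ∀ e ∈ P, part e = i := by
  obtain ⟨hxy', hconn, hxP, hyP, hdx, hdy, hint⟩ := hP
  obtain ⟨e₀, he₀, -⟩ := (mem_vertsOf_iff _ _ _).mp hxP
  refine ⟨part e₀, ?_⟩
  by_contra hcon
  push_neg at hcon
  obtain ⟨f₀, hf₀, hf₀i⟩ := hcon
  set S := P.filter fun e => part e = part e₀ with hS
  have hSne : S.Nonempty := ⟨e₀, Finset.mem_filter.mpr ⟨he₀, rfl⟩⟩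
  have hPS : (P \ S).Nonempty :=
    ⟨f₀, Finset.mem_sdiff.mpr ⟨hf₀, fun h => hf₀i (Finset.mem_filter.mp h).2⟩⟩
  obtain ⟨v, e, f, heS, hfS, hv1, hv2⟩ := crossing Γ hconn (Finset.filter_subset _ P) hSne hPS
  have hfSm := Finset.mem_sdiff.mp hfS
  have hfi : ¬ part f = part e₀ := fun h => hfSm.2 (Finset.mem_filter.mpr ⟨hfSm.1, h⟩)
  have hei : part e = part e₀ := (Finset.mem_filter.mp heS).2
  have hef : e ≠ f := fun h => hfi (h ▸ hei)
  have h2 : 2 ≤ Γ.deg P v :=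
    deg_pair_le Γ hef (Finset.filter_subset _ P heS) hfSm.1 hv1 hv2
  rcases hsep e f (fun h => hfi (h ▸ hei)) v hv1 hv2 with rfl | rfl
  · rw [hdx] at h2; omega
  · rw [hdy] at h2; omega

end Classes


section Main
open Multigraph Finset

variable {Γ : Multigraph V E} {x y : V} {part : E → Fin 3} {H : Multigraph (V ⊕ Fin 3) E}
variable (hxy : x ≠ y)
variable (hsep : ∀ e f, part e ≠ part f →
      ∀ u : V, u ∈ Γ.ends e → u ∈ Γ.ends f → u = x ∨ u = y)
variable (hH : ∀ e, H.ends e = Sym2.map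
      (fun u => if u = y then Sum.inr (part e)
        else if u = x then Sum.inr (part e - 1) else Sum.inl u) (Γ.ends e))

lemma Phi_x (i : Fin 3) (hxy : x ≠ y) : Phi x y i x = Sum.inr (i - 1) := by
  unfold Phi
  rw [if_neg hxy, if_pos rfl]

lemma Phi_y (i : Fin 3) : Phi x y i y = Sum.inr i := by
  unfold Phi
  rw [if_pos rfl]

include hxy hH in
lemma deg_H_phi {C : Finset E} {i : Fin 3} (hpart : ∀ e ∈ C, part e = i) (u : V) :
    H.deg C (Phi x y i u) = Γ.deg C u := by
  simp only [deg_eq_sum_cnt]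
  refine Finset.sum_congr rfl fun e he => ?_
  rw [← hpart e he]
  exact cnt_H_phi hxy hH e u

include hxy hH in
lemma balanced_to_H {C : Finset E} {i : Fin 3} (hC : Γ.IsCycle C)
    (hpart : ∀ e ∈ C, part e = i) : H.IsCycle C := by
  obtain ⟨hne, hconn, hdeg⟩ := hC
  refine ⟨hne, ?_, ?_⟩
  · intro v' hv' w' hw'
    obtain ⟨e, he, hv'e⟩ := (mem_vertsOf_iff _ _ _).mp hv'
    obtain ⟨f, hf, hw'f⟩ := (mem_vertsOf_iff _ _ _).mp hw'
    rw [map_mem_ends hH] at hv'e hw'f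
    obtain ⟨u, hu, hphiu⟩ := hv'e
    obtain ⟨w, hw, hphiw⟩ := hw'f
    rw [hpart e he] at hphiu
    rw [hpart f hf] at hphiw
    have hreach := hconn u ((mem_vertsOf_iff _ _ _).mpr ⟨e, he, hu⟩)
      w ((mem_vertsOf_iff _ _ _).mpr ⟨f, hf, hw⟩)
    have := reachE_lift hxy hH hpart hreach
    rwa [hphiu, hphiw] at this
  · intro v' hv'
    obtain ⟨e, he, hv'e⟩ := (mem_vertsOf_iff _ _ _).mp hv'
    rw [map_mem_ends hH] at hv'e
    obtain ⟨u, hu, hphiu⟩ := hv'e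
    rw [hpart e he] at hphiu
    rw [← hphiu, deg_H_phi hxy hH hpart u]
    exact hdeg u ((mem_vertsOf_iff _ _ _).mpr ⟨e, he, hu⟩)

lemma fin3_cover : ∀ i₁ i₂ i₃ j : Fin 3, i₁ ≠ i₂ → i₁ ≠ i₃ → i₂ ≠ i₃ →
    j = i₁ ∨ j = i₂ ∨ j = i₃ := by decide

include hxy hH in
lemma theta_to_H {P₁ P₂ P₃ : Finset E} {i₁ i₂ i₃ : Fin 3}
    (hT : Γ.ThetaData P₁ P₂ P₃ x y)
    (hp1 : ∀ e ∈ P₁, part e = i₁) (hp2 : ∀ e ∈ P₂, part e = i₂)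
    (hp3 : ∀ e ∈ P₃, part e = i₃)
    (h12 : i₁ ≠ i₂) (h13 : i₁ ≠ i₃) (h23 : i₂ ≠ i₃) :
    H.IsCycle (P₁ ∪ P₂ ∪ P₃) := by
  obtain ⟨hP1, hP2, hP3, hd12, hd13, hd23, hv12, hv13, hv23⟩ := hT
  set C := P₁ ∪ P₂ ∪ P₃ with hCdef
  have hsub1 : P₁ ⊆ C := by intro e he; simp [hCdef, he]
  have hsub2 : P₂ ⊆ C := by intro e he; simp [hCdef, he]
  have hsub3 : P₃ ⊆ C := by intro e he; simp [hCdef, he]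
  -- filters of C are the paths
  have hfilter : ∀ j : Fin 3, j = i₁ → C.filter (fun e => part e = j) = P₁ := by
    intro j hj
    subst hj
    ext e
    rw [Finset.mem_filter]
    constructor
    · rintro ⟨heC, hpe⟩
      rcases Finset.mem_union.mp heC with h | h3
      · rcases Finset.mem_union.mp h with h1 | h2
        · exact h1
        · exact absurd (hp2 e h2 ▸ hpe) h12.symm
      · exact absurd (hp3 e h3 ▸ hpe) h13.symm
    · intro he
      exact ⟨hsub1 he, hp1 e he⟩
  have hfilter2 : ∀ j : Fin 3, j = i₂ → C.filter (fun e => part e = j) = P₂ := by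
    intro j hj
    subst hj
    ext e
    rw [Finset.mem_filter]
    constructor
    · rintro ⟨heC, hpe⟩
      rcases Finset.mem_union.mp heC with h | h3
      · rcases Finset.mem_union.mp h with h1 | h2
        · exact absurd (hp1 e h1 ▸ hpe) h12
        · exact h2
      · exact absurd (hp3 e h3 ▸ hpe) h23.symm
    · intro he
      exact ⟨hsub2 he, hp2 e he⟩
  have hfilter3 : ∀ j : Fin 3, j = i₃ → C.filter (fun e => part e = j) = P₃ := by
    intro j hj
    subst hj
    ext e
    rw [Finset.mem_filter]
    constructor
    · rintro ⟨heC, hpe⟩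
      rcases Finset.mem_union.mp heC with h | h3
      · rcases Finset.mem_union.mp h with h1 | h2
        · exact absurd (hp1 e h1 ▸ hpe) h13
        · exact absurd (hp2 e h2 ▸ hpe) h23
      · exact h3
    · intro he
      exact ⟨hsub3 he, hp3 e he⟩
  have hCne : C.Nonempty := by
    obtain ⟨e, he, -⟩ := (mem_vertsOf_iff _ _ _).mp hP1.2.2.1
    exact ⟨e, hsub1 he⟩
  -- reach from any image vertex of a path to its two hubs
  have hhub : ∀ (P : Finset E) (i : Fin 3), Γ.IsPath P x y → (∀ e ∈ P, part e = i) →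
      P ⊆ C → ∀ u ∈ Γ.vertsOf P,
        H.ReachE C (Phi x y i u) (Sum.inr i) ∧ H.ReachE C (Phi x y i u) (Sum.inr (i - 1)) := by
    intro P i hP hp hPC u hu
    constructor
    · have := reachE_lift hxy hH hp (hP.2.1 u hu y hP.2.2.2.1)
      rw [Phi_y] at this
      exact reachE_mono H hPC this
    · have := reachE_lift hxy hH hp (hP.2.1 u hu x hP.2.2.1)
      rw [Phi_x i hxy] at this
      exact reachE_mono H hPC this
  -- hubs are interconnected
  have hhubconn : ∀ j j' : Fin 3, H.ReachE C (Sum.inr j) (Sum.inr j') := by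
    have hstep : ∀ j : Fin 3, H.ReachE C (Sum.inr j) (Sum.inr (j - 1)) := by
      intro j
      rcases fin3_cover i₁ i₂ i₃ j h12 h13 h23 with rfl | rfl | rfl
      · have h := hhub P₁ j hP1 hp1 hsub1 y hP1.2.2.2.1
        rw [Phi_y] at h
        exact (reachE_symm H h.1).trans h.2
      · have h := hhub P₂ j hP2 hp2 hsub2 y hP2.2.2.2.1
        rw [Phi_y] at h
        exact (reachE_symm H h.1).trans h.2
      · have h := hhub P₃ j hP3 hp3 hsub3 y hP3.2.2.2.1
        rw [Phi_y] at h
        exact (reachE_symm H h.1).trans h.2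
    intro j j'
    have hcases : ∀ a b : Fin 3, b = a ∨ b = a - 1 ∨ b = a - 1 - 1 := by decide
    rcases hcases j j' with rfl | rfl | rfl
    · exact Relation.ReflTransGen.refl
    · exact hstep j
    · exact (hstep j).trans (hstep (j - 1))
  -- decompose a vertex of C
  have hdecomp : ∀ v' ∈ H.vertsOf C, ∃ (P : Finset E) (i : Fin 3) (u : V),
      Γ.IsPath P x y ∧ (∀ e ∈ P, part e = i) ∧ P ⊆ C ∧ u ∈ Γ.vertsOf P ∧
        Phi x y i u = v' := by
    intro v' hv'
    obtain ⟨e, he, hv'e⟩ := (mem_vertsOf_iff _ _ _).mp hv'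
    rw [map_mem_ends hH] at hv'e
    obtain ⟨u, hu, hphiu⟩ := hv'e
    rcases Finset.mem_union.mp he with h | h3
    · rcases Finset.mem_union.mp h with h1 | h2
      · exact ⟨P₁, i₁, u, hP1, hp1, hsub1, (mem_vertsOf_iff _ _ _).mpr ⟨e, h1, hu⟩,
          by rw [← hp1 e h1]; exact hphiu⟩
      · exact ⟨P₂, i₂, u, hP2, hp2, hsub2, (mem_vertsOf_iff _ _ _).mpr ⟨e, h2, hu⟩,
          by rw [← hp2 e h2]; exact hphiu⟩
    · exact ⟨P₃, i₃, u, hP3, hp3, hsub3, (mem_vertsOf_iff _ _ _).mpr ⟨e, h3, hu⟩,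
        by rw [← hp3 e h3]; exact hphiu⟩
  refine ⟨hCne, ?_, ?_⟩
  · intro a' ha' b' hb'
    obtain ⟨Pa, ia, ua, hPa, hpa, hPaC, hua, hphia⟩ := hdecomp a' ha'
    obtain ⟨Pb, ib, ub, hPb, hpb, hPbC, hub, hphib⟩ := hdecomp b' hb'
    have r1 : H.ReachE C a' (Sum.inr ia) := hphia ▸ (hhub Pa ia hPa hpa hPaC ua hua).1
    have r2 : H.ReachE C b' (Sum.inr ib) := hphib ▸ (hhub Pb ib hPb hpb hPbC ub hub).1
    exact (r1.trans (hhubconn ia ib)).trans (reachE_symm H r2)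
  · intro v' hv'
    obtain ⟨e, he, hv'e⟩ := (mem_vertsOf_iff _ _ _).mp hv'
    rw [map_mem_ends hH] at hv'e
    obtain ⟨u, hu, hphiu⟩ := hv'e
    have hclass : ∀ j : Fin 3, ∃ P, Γ.IsPath P x y ∧ C.filter (fun e => part e = j) = P := by
      intro j
      rcases fin3_cover i₁ i₂ i₃ j h12 h13 h23 with h | h | h
      · exact ⟨P₁, hP1, hfilter j h⟩
      · exact ⟨P₂, hP2, hfilter2 j h⟩
      · exact ⟨P₃, hP3, hfilter3 j h⟩
    have hinr : ∀ j : Fin 3, H.deg C (Sum.inr j) = 2 := by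
      intro j
      rw [deg_H_inr hxy hH C j]
      obtain ⟨Py, hPy, hfy⟩ := hclass j
      obtain ⟨Px, hPx, hfx⟩ := hclass (j + 1)
      rw [hfy, hfx, hPy.2.2.2.2.2.1, hPx.2.2.2.2.1]
    rcases eq_or_ne u x with rfl | hux
    · rw [← hphiu, Phi_x _ hxy]
      exact hinr _
    rcases eq_or_ne u y with rfl | huy
    · rw [← hphiu, Phi_y]
      exact hinr _
    · have hphi' : Phi x y (part e) u = Sum.inl u := Phi_eq_inl.mpr ⟨rfl, hux, huy⟩
      rw [← hphiu, hphi', deg_H_inl hxy hH C hux huy]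
      have hdisj' : Disjoint (P₁ ∪ P₂) P₃ := Finset.disjoint_union_left.mpr ⟨hd13, hd23⟩
      rw [hCdef, deg_union Γ hdisj', deg_union Γ hd12]
      have hnot : ∀ {Pa Pb : Finset E}, Γ.vertsOf Pa ∩ Γ.vertsOf Pb = {x, y} →
          u ∈ Γ.vertsOf Pa → u ∉ Γ.vertsOf Pb := by
        intro Pa Pb hab hua hub
        have : u ∈ ({x, y} : Finset V) := hab ▸ Finset.mem_inter.mpr ⟨hua, hub⟩
        simp [hux, huy] at this
      have hv21 : Γ.vertsOf P₂ ∩ Γ.vertsOf P₁ = {x, y} := by rw [Finset.inter_comm]; exact hv12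
      have hv31 : Γ.vertsOf P₃ ∩ Γ.vertsOf P₁ = {x, y} := by rw [Finset.inter_comm]; exact hv13
      have hv32 : Γ.vertsOf P₃ ∩ Γ.vertsOf P₂ = {x, y} := by rw [Finset.inter_comm]; exact hv23
      rcases Finset.mem_union.mp he with h | h3
      · rcases Finset.mem_union.mp h with h1 | h2
        · have hu1 : u ∈ Γ.vertsOf P₁ := (mem_vertsOf_iff _ _ _).mpr ⟨e, h1, hu⟩
          rw [hP1.2.2.2.2.2.2 u hu1 hux huy, deg_eq_zero_of_not_mem Γ (hnot hv12 hu1),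
            deg_eq_zero_of_not_mem Γ (hnot hv13 hu1)]
        · have hu2 : u ∈ Γ.vertsOf P₂ := (mem_vertsOf_iff _ _ _).mpr ⟨e, h2, hu⟩
          rw [hP2.2.2.2.2.2.2 u hu2 hux huy, deg_eq_zero_of_not_mem Γ (hnot hv21 hu2),
            deg_eq_zero_of_not_mem Γ (hnot hv23 hu2)]
      · have hu3 : u ∈ Γ.vertsOf P₃ := (mem_vertsOf_iff _ _ _).mpr ⟨e, h3, hu⟩
        rw [hP3.2.2.2.2.2.2 u hu3 hux huy, deg_eq_zero_of_not_mem Γ (hnot hv31 hu3),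
          deg_eq_zero_of_not_mem Γ (hnot hv32 hu3)]

include hxy hH in
lemma Hcycle_single_part {C : Finset E} {i : Fin 3} (hC : H.IsCycle C)
    (hpart : ∀ e ∈ C, part e = i) : Γ.IsCycle C := by
  obtain ⟨hne, hconn, hdeg⟩ := hC
  have hmem : ∀ u ∈ Γ.vertsOf C, Phi x y i u ∈ H.vertsOf C := by
    intro u hu
    obtain ⟨e, he, hue⟩ := (mem_vertsOf_iff _ _ _).mp hu
    refine (mem_vertsOf_iff _ _ _).mpr ⟨e, he, ?_⟩
    rw [map_mem_ends hH]
    exact ⟨u, hue, by rw [hpart e he]⟩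
  refine ⟨hne, ?_, ?_⟩
  · intro u hu w hw
    have hreach := hconn _ (hmem u hu) _ (hmem w hw)
    obtain ⟨b, hb, hr⟩ := reachE_descend hxy hH hpart hreach u rfl
    rwa [Phi_inj hxy i hb] at hr
  · intro v hv
    rw [← deg_H_phi hxy hH hpart v]
    exact hdeg _ (hmem v hv)

lemma thetaData_symm {G : Multigraph V E} {P₁ P₂ P₃ : Finset E} {u w : V}
    (h : G.ThetaData P₁ P₂ P₃ u w) : G.ThetaData P₁ P₂ P₃ w u := by
  obtain ⟨h1, h2, h3, h4, h5, h6, h7, h8, h9⟩ := h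
  rw [Finset.pair_comm u w] at h7 h8 h9
  exact ⟨isPath_symm G h1, isPath_symm G h2, isPath_symm G h3, h4, h5, h6, h7, h8, h9⟩

include hxy hsep hH in
lemma frame_to_H {B : Set (Finset E)}
    (hB : B = {C : Finset E | Γ.IsCycle C ∧ ∃ i, ∀ e ∈ C, part e = i})
    {C : Finset E} (hFC : Γ.FrameCircuit B C) : H.IsCycle C := by
  have hnotB : ∀ {D : Finset E}, Γ.IsCycle D → D ∉ B → ¬ ∃ i, ∀ e ∈ D, part e = i := by
    intro D hcyc hD hex
    exact hD (hB ▸ ⟨hcyc, hex⟩)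
  rcases hFC with ⟨hcyc, hCB⟩ | ⟨C₁, C₂, hTH, h1B, h2B, rfl⟩ |
      ⟨C₁, C₂, P, hLH, h1B, h2B, rfl⟩ | ⟨hth, hall⟩
  · rw [hB] at hCB
    obtain ⟨-, i, hi⟩ := hCB
    exact balanced_to_H hxy hH hcyc hi
  · -- tight handcuffs are impossible
    exfalso
    obtain ⟨hc1, hc2, hdisj, hcard⟩ := hTH
    obtain ⟨hx1, hy1, -, -⟩ := cycle_mem_xy hsep hc1 (hnotB hc1 h1B) hxy
    obtain ⟨hx2, hy2, -, -⟩ := cycle_mem_xy hsep hc2 (hnotB hc2 h2B) hxy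
    have hsub : ({x, y} : Finset V) ⊆ Γ.vertsOf C₁ ∩ Γ.vertsOf C₂ := by
      intro v hv
      rcases Finset.mem_insert.mp hv with rfl | hv
      · exact Finset.mem_inter.mpr ⟨hx1, hx2⟩
      · rw [Finset.mem_singleton.mp hv]
        exact Finset.mem_inter.mpr ⟨hy1, hy2⟩
    have hle := Finset.card_le_card hsub
    rw [hcard, Finset.card_pair hxy] at hle
    omega
  · -- loose handcuffs are impossible
    exfalso
    obtain ⟨hc1, hc2, hdisj, -, -, -⟩ := hLH
    obtain ⟨hx1, -, -, -⟩ := cycle_mem_xy hsep hc1 (hnotB hc1 h1B) hxy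
    obtain ⟨hx2, -, -, -⟩ := cycle_mem_xy hsep hc2 (hnotB hc2 h2B) hxy
    exact Finset.disjoint_left.mp hdisj hx1 hx2
  · -- theta case
    obtain ⟨u, w, P₁, P₂, P₃, hTD, rfl⟩ := hth
    -- the three pairwise unions are unbalanced cycles
    have hv21 : Γ.vertsOf P₂ ∩ Γ.vertsOf P₁ = {u, w} := by
      rw [Finset.inter_comm]; exact hTD.2.2.2.2.2.2.1
    have hcyc12 : Γ.IsCycle (P₁ ∪ P₂) :=
      paths_union_cycle Γ hTD.1 hTD.2.1 hTD.2.2.2.1 hTD.2.2.2.2.2.2.1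
    have hcyc13 : Γ.IsCycle (P₁ ∪ P₃) :=
      paths_union_cycle Γ hTD.1 hTD.2.2.1 hTD.2.2.2.2.1 hTD.2.2.2.2.2.2.2.1
    have hcyc23 : Γ.IsCycle (P₂ ∪ P₃) :=
      paths_union_cycle Γ hTD.2.1 hTD.2.2.1 hTD.2.2.2.2.2.1 hTD.2.2.2.2.2.2.2.2
    have hsub12 : P₁ ∪ P₂ ⊆ P₁ ∪ P₂ ∪ P₃ := by
      intro e he; rcases Finset.mem_union.mp he with h | h <;> simp [h]
    have hsub13 : P₁ ∪ P₃ ⊆ P₁ ∪ P₂ ∪ P₃ := by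
      intro e he; rcases Finset.mem_union.mp he with h | h <;> simp [h]
    have hsub23 : P₂ ∪ P₃ ⊆ P₁ ∪ P₂ ∪ P₃ := by
      intro e he; rcases Finset.mem_union.mp he with h | h <;> simp [h]
    have hunb12 := hnotB hcyc12 (hall _ hsub12 hcyc12)
    have hunb13 := hnotB hcyc13 (hall _ hsub13 hcyc13)
    have hunb23 := hnotB hcyc23 (hall _ hsub23 hcyc23)
    obtain ⟨hx12, hy12, -, -⟩ := cycle_mem_xy hsep hcyc12 hunb12 hxy
    obtain ⟨hx13, hy13, -, -⟩ := cycle_mem_xy hsep hcyc13 hunb13 hxy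
    obtain ⟨hx23, hy23, -, -⟩ := cycle_mem_xy hsep hcyc23 hunb23 hxy
    -- x and y are the branch vertices
    have hmem_uw : ∀ v : V, v ∈ Γ.vertsOf (P₁ ∪ P₂) → v ∈ Γ.vertsOf (P₂ ∪ P₃) →
        v ∈ Γ.vertsOf (P₁ ∪ P₃) → v = u ∨ v = w := by
      intro v h12 h23 h13
      rw [vertsOf_union, Finset.mem_union] at h12 h23 h13
      have hpair : v ∈ ({u, w} : Finset V) → v = u ∨ v = w := by
        intro hv
        rcases Finset.mem_insert.mp hv with h | h
        · exact Or.inl h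
        · exact Or.inr (Finset.mem_singleton.mp h)
      rcases h12 with h1 | h2
      · rcases h23 with h2 | h3
        · exact hpair (hTD.2.2.2.2.2.2.1 ▸ Finset.mem_inter.mpr ⟨h1, h2⟩)
        · exact hpair (hTD.2.2.2.2.2.2.2.1 ▸ Finset.mem_inter.mpr ⟨h1, h3⟩)
      · rcases h13 with h1 | h3
        · exact hpair (hTD.2.2.2.2.2.2.1 ▸ Finset.mem_inter.mpr ⟨h1, h2⟩)
        · exact hpair (hTD.2.2.2.2.2.2.2.2 ▸ Finset.mem_inter.mpr ⟨h2, h3⟩)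
    have hxuw : x = u ∨ x = w := hmem_uw x hx12 hx23 hx13
    have hyuw : y = u ∨ y = w := hmem_uw y hy12 hy23 hy13
    -- normalize to u = x, w = y
    have hTDxy : Γ.ThetaData P₁ P₂ P₃ x y := by
      rcases hxuw with rfl | hxw
      · rcases hyuw with rfl | rfl
        · exact absurd rfl hxy
        · exact hTD
      · rcases hyuw with rfl | rfl
        · rw [hxw]; exact thetaData_symm hTD
        · exact absurd hxw (by rw [← hxw] at hxy; exact fun h => hxy (h ▸ rfl))
    -- each path has a single part
    obtain ⟨i₁, hi1⟩ := path_single_part hsep hTDxy.1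
    obtain ⟨i₂, hi2⟩ := path_single_part hsep hTDxy.2.1
    obtain ⟨i₃, hi3⟩ := path_single_part hsep hTDxy.2.2.1
    have hne12 : i₁ ≠ i₂ := by
      rintro rfl
      exact hunb12 ⟨i₁, fun e he => by
        rcases Finset.mem_union.mp he with h | h
        · exact hi1 e h
        · exact hi2 e h⟩
    have hne13 : i₁ ≠ i₃ := by
      rintro rfl
      exact hunb13 ⟨i₁, fun e he => by
        rcases Finset.mem_union.mp he with h | h
        · exact hi1 e h
        · exact hi3 e h⟩
    have hne23 : i₂ ≠ i₃ := by
      rintro rfl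
      exact hunb23 ⟨i₂, fun e he => by
        rcases Finset.mem_union.mp he with h | h
        · exact hi2 e h
        · exact hi3 e h⟩
    exact theta_to_H hxy hH hTDxy hi1 hi2 hi3 hne12 hne13 hne23

include hxy hsep hH in
lemma Hcycle_multi {C : Finset E} (hC : H.IsCycle C)
    {e₀ f₀ : E} (he₀ : e₀ ∈ C) (hf₀ : f₀ ∈ C) (hpef : part e₀ ≠ part f₀) :
    ∀ j : Fin 3, Γ.IsPath (C.filter fun e => part e = j) x y := by
  classical
  obtain ⟨hne, hconn, hdeg⟩ := hC
  set S : Fin 3 → Finset E := fun j => C.filter fun e => part e = j with hS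
  have hSsub : ∀ j, S j ⊆ C := fun j => Finset.filter_subset _ _
  have hSmem : ∀ {j : Fin 3} {e : E}, e ∈ S j ↔ e ∈ C ∧ part e = j := by
    intro j e
    simp [hS]
  have hhubmem_y : ∀ {j : Fin 3} {e : E}, e ∈ S j → y ∈ Γ.ends e →
      Sum.inr j ∈ H.vertsOf C := by
    intro j e he hy
    refine (mem_vertsOf_iff _ _ _).mpr ⟨e, hSsub j he, ?_⟩
    rw [map_mem_ends hH]
    exact ⟨y, hy, (Phi_y (part e)).trans (congrArg Sum.inr (hSmem.mp he).2)⟩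
  have hhubmem_x : ∀ {j : Fin 3} {e : E}, e ∈ S (j + 1) → x ∈ Γ.ends e →
      Sum.inr j ∈ H.vertsOf C := by
    intro j e he hx
    refine (mem_vertsOf_iff _ _ _).mpr ⟨e, hSsub _ he, ?_⟩
    rw [map_mem_ends hH]
    exact ⟨x, hx, (Phi_x (part e) hxy).trans
      (congrArg Sum.inr ((fin3_sub_eq_iff (part e) j).mpr (hSmem.mp he).2))⟩
  have hdeg_inr : ∀ j : Fin 3, Sum.inr j ∈ H.vertsOf C →
      Γ.deg (S j) y + Γ.deg (S (j + 1)) x = 2 := by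
    intro j hj
    have h := hdeg _ hj
    rw [deg_H_inr hxy hH C j] at h
    exact h
  have hint : ∀ {j : Fin 3} {v : V}, v ≠ x → v ≠ y → v ∈ Γ.vertsOf (S j) →
      Γ.deg (S j) v = 2 := by
    intro j v hvx hvy hv
    have h1 : Γ.deg (S j) v = Γ.deg C v := class_closed hsep hvx hvy hv
    have hvC : v ∈ Γ.vertsOf C := vertsOf_mono Γ (hSsub j) hv
    have h2 : Sum.inl v ∈ H.vertsOf C := (mem_vertsOf_H_inl hxy hH).mpr ⟨hvC, hvx, hvy⟩
    have h3 := hdeg _ h2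
    rw [deg_H_inl hxy hH C hvx hvy] at h3
    exact h1.trans h3
  have hparity : ∀ j, Even (Γ.deg (S j) x + Γ.deg (S j) y) := by
    intro j
    apply even_deg_xy Γ hxy
    intro v hvx hvy
    by_cases hv : v ∈ Γ.vertsOf (S j)
    · rw [hint hvx hvy hv]
      exact ⟨1, rfl⟩
    · rw [deg_eq_zero_of_not_mem Γ hv]
      exact ⟨0, rfl⟩
  have hby : ∀ j, Γ.deg (S j) y ≤ 2 := by
    intro j
    rcases Nat.eq_zero_or_pos (Γ.deg (S j) y) with h | h
    · omega
    · obtain ⟨e, he, hye⟩ := (mem_vertsOf_iff _ _ _).mp ((deg_pos_iff _ _ _).mp h)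
      have h2 := hdeg_inr j (hhubmem_y he hye)
      omega
  have hax : ∀ j, Γ.deg (S j) x ≤ 2 := by
    intro j
    rcases Nat.eq_zero_or_pos (Γ.deg (S j) x) with h | h
    · omega
    · obtain ⟨e, he, hxe⟩ := (mem_vertsOf_iff _ _ _).mp ((deg_pos_iff _ _ _).mp h)
      have he' : e ∈ S (j - 1 + 1) := by rwa [sub_add_cancel]
      have h2 := hdeg_inr (j - 1) (hhubmem_x he' hxe)
      rw [sub_add_cancel] at h2
      omega
  have hkey : ∀ j, (S j).Nonempty → (C \ S j).Nonempty →
      Γ.deg (S j) x = 1 ∧ Γ.deg (S j) y = 1 := by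
    intro j hSne hCSne
    obtain ⟨v', e, f, heS, hfS, hv1, hv2⟩ := crossing H hconn (hSsub j) hSne hCSne
    have hfC := (Finset.mem_sdiff.mp hfS).1
    have hfj : part f ≠ j := fun h => (Finset.mem_sdiff.mp hfS).2 (hSmem.mpr ⟨hfC, h⟩)
    have hej : part e = j := (hSmem.mp heS).2
    have hef : part e ≠ part f := fun hpe => hfj (by rw [← hpe]; exact hej)
    rw [map_mem_ends hH] at hv1 hv2
    obtain ⟨u, hue, hphiu⟩ := hv1
    obtain ⟨w, hwf, hphiw⟩ := hv2
    have huxy : u = x ∨ u = y := by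
      by_contra hcon
      push_neg at hcon
      have h1 : Phi x y (part e) u = Sum.inl u := Phi_eq_inl.mpr ⟨rfl, hcon.1, hcon.2⟩
      rw [h1] at hphiu
      rw [← hphiu] at hphiw
      obtain ⟨hwu, -, -⟩ := Phi_eq_inl.mp hphiw
      rcases hsep e f hef u hue (hwu ▸ hwf) with h | h
      · exact hcon.1 h
      · exact hcon.2 h
    rcases huxy with hueq | hueq
    · -- u = x : v' = inr (j - 1)
      have huex : x ∈ Γ.ends e := hueq ▸ hue
      rw [hueq, Phi_x (part e) hxy, hej] at hphiu
      rw [← hphiu] at hphiw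
      have hxpos : 0 < Γ.deg (S j) x :=
        (deg_pos_iff _ _ _).mpr ((mem_vertsOf_iff _ _ _).mpr ⟨e, heS, huex⟩)
      rcases (Phi_eq_inr hxy).mp hphiw with ⟨hwy, hpf⟩ | ⟨-, -, hpf⟩
      · -- w = y, part f = j - 1
        have hwfy : y ∈ Γ.ends f := hwy ▸ hwf
        have hfS' : f ∈ S (j - 1) := hSmem.mpr ⟨hfC, hpf⟩
        have hbpos : 0 < Γ.deg (S (j - 1)) y :=
          (deg_pos_iff _ _ _).mpr ((mem_vertsOf_iff _ _ _).mpr ⟨f, hfS', hwfy⟩)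
        have he' : e ∈ S (j - 1 + 1) := by rwa [sub_add_cancel]
        have h2 := hdeg_inr (j - 1) (hhubmem_x he' huex)
        rw [sub_add_cancel] at h2
        have haj : Γ.deg (S j) x = 1 := by omega
        obtain ⟨k, hk⟩ := hparity j
        have hb2 := hby j
        exact ⟨haj, by omega⟩
      · -- part f - 1 = j - 1 would force part f = j
        exfalso
        apply hfj
        have hpf2 : part f = j - 1 + 1 := (fin3_sub_eq_iff (part f) (j - 1)).mp hpf
        rwa [sub_add_cancel] at hpf2
    · -- u = y : v' = inr j
      have huey : y ∈ Γ.ends e := hueq ▸ hue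
      rw [hueq, Phi_y (part e), hej] at hphiu
      rw [← hphiu] at hphiw
      have hypos : 0 < Γ.deg (S j) y :=
        (deg_pos_iff _ _ _).mpr ((mem_vertsOf_iff _ _ _).mpr ⟨e, heS, huey⟩)
      rcases (Phi_eq_inr hxy).mp hphiw with ⟨-, hpf⟩ | ⟨hwx, -, hpf⟩
      · exact absurd hpf hfj
      · -- w = x, part f = j + 1
        have hwfx : x ∈ Γ.ends f := hwx ▸ hwf
        have hfS' : f ∈ S (j + 1) := hSmem.mpr ⟨hfC, (fin3_sub_eq_iff (part f) j).mp hpf⟩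
        have hapos : 0 < Γ.deg (S (j + 1)) x :=
          (deg_pos_iff _ _ _).mpr ((mem_vertsOf_iff _ _ _).mpr ⟨f, hfS', hwfx⟩)
        have h2 := hdeg_inr j (hhubmem_y heS huey)
        have hbj : Γ.deg (S j) y = 1 := by omega
        obtain ⟨k, hk⟩ := hparity j
        have ha2 := hax j
        exact ⟨by omega, hbj⟩
  have hCS : ∀ j, (C \ S j).Nonempty := by
    intro j
    rcases eq_or_ne (part e₀) j with rfl | h
    · exact ⟨f₀, Finset.mem_sdiff.mpr ⟨hf₀, fun hh => hpef (hSmem.mp hh).2.symm⟩⟩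
    · exact ⟨e₀, Finset.mem_sdiff.mpr ⟨he₀, fun hh => h (hSmem.mp hh).2⟩⟩
  have hstep : ∀ j, (S j).Nonempty → (S (j + 1)).Nonempty := by
    intro j hj
    obtain ⟨haj, hbj⟩ := hkey j hj (hCS j)
    have hyv : y ∈ Γ.vertsOf (S j) := (deg_pos_iff _ _ _).mp (by omega)
    obtain ⟨e, he, hye⟩ := (mem_vertsOf_iff _ _ _).mp hyv
    have h2 := hdeg_inr j (hhubmem_y he hye)
    have hpos : 0 < Γ.deg (S (j + 1)) x := by omega
    obtain ⟨g, hg, -⟩ := (mem_vertsOf_iff _ _ _).mp ((deg_pos_iff _ _ _).mp hpos)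
    exact ⟨g, hg⟩
  have hSne : ∀ j, (S j).Nonempty := by
    have h0 : (S (part e₀)).Nonempty := ⟨e₀, hSmem.mpr ⟨he₀, rfl⟩⟩
    have hc : ∀ p q : Fin 3, q = p ∨ q = p + 1 ∨ q = p + 1 + 1 := by decide
    intro j
    rcases hc (part e₀) j with rfl | rfl | rfl
    · exact h0
    · exact hstep _ h0
    · exact hstep _ (hstep _ h0)
  have h11 : ∀ j, Γ.deg (S j) x = 1 ∧ Γ.deg (S j) y = 1 := fun j => hkey j (hSne j) (hCS j)
  -- connectivity of each class
  have hconnS : ∀ j, Γ.ConnectedOn (S j) := by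
    intro j
    obtain ⟨haj, hbj⟩ := h11 j
    have hxv : x ∈ Γ.vertsOf (S j) := (deg_pos_iff _ _ _).mp (by omega)
    have hyv : y ∈ Γ.vertsOf (S j) := (deg_pos_iff _ _ _).mp (by omega)
    suffices hsuff : ∀ w ∈ Γ.vertsOf (S j), Γ.ReachE (S j) x w by
      intro u hu w hw
      exact (reachE_symm Γ (hsuff u hu)).trans (hsuff w hw)
    by_contra hcon
    push_neg at hcon
    obtain ⟨w₀, hw₀v, hw₀⟩ := hcon
    set D : Finset E := (S j).filter (fun e => ∀ v ∈ Γ.ends e, Γ.ReachE (S j) x v) with hD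
    have hDsub : D ⊆ S j := Finset.filter_subset _ _
    have hDfull : ∀ e ∈ S j, ∀ v ∈ Γ.ends e, Γ.ReachE (S j) x v → e ∈ D := by
      intro e he v hv hR
      refine Finset.mem_filter.mpr ⟨he, fun v2 hv2 => hR.tail ⟨e, he, hv, hv2⟩⟩
    have hDR : ∀ v ∈ Γ.vertsOf D, Γ.ReachE (S j) x v := by
      intro v hv
      obtain ⟨e, he, hve⟩ := (mem_vertsOf_iff _ _ _).mp hv
      exact (Finset.mem_filter.mp he).2 v hve
    have hD'R : ∀ v ∈ Γ.vertsOf (S j \ D), ¬ Γ.ReachE (S j) x v := by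
      intro v hv hR
      obtain ⟨e, he, hve⟩ := (mem_vertsOf_iff _ _ _).mp hv
      have he' := Finset.mem_sdiff.mp he
      exact he'.2 (hDfull e he'.1 v hve hR)
    have hDne : D.Nonempty := by
      obtain ⟨e, he, hxe⟩ := (mem_vertsOf_iff _ _ _).mp hxv
      exact ⟨e, hDfull e he x hxe Relation.ReflTransGen.refl⟩
    have hD'ne : (S j \ D).Nonempty := by
      obtain ⟨f, hf, hwf⟩ := (mem_vertsOf_iff _ _ _).mp hw₀v
      refine ⟨f, Finset.mem_sdiff.mpr ⟨hf, fun hfD => ?_⟩⟩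
      exact hw₀ ((Finset.mem_filter.mp hfD).2 w₀ hwf)
    have hsplit : ∀ v, Γ.deg (S j) v = Γ.deg D v + Γ.deg (S j \ D) v := by
      intro v
      rw [← deg_union Γ Finset.disjoint_sdiff v, Finset.union_sdiff_of_subset hDsub]
    have hD'x : Γ.deg (S j \ D) x = 0 :=
      deg_eq_zero_of_not_mem Γ (fun h => hD'R x h Relation.ReflTransGen.refl)
    have hDx : Γ.deg D x = 1 := by
      have h1 := hsplit x
      omega
    have hevD : Even (Γ.deg D x + Γ.deg D y) := by
      apply even_deg_xy Γ hxy
      intro v hvx hvy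
      by_cases hv : v ∈ Γ.vertsOf D
      · have hR := hDR v hv
        have hD'v : Γ.deg (S j \ D) v = 0 :=
          deg_eq_zero_of_not_mem Γ (fun h => hD'R v h hR)
        have hSv : v ∈ Γ.vertsOf (S j) := vertsOf_mono Γ hDsub hv
        have h2 := hint hvx hvy hSv
        have h3 := hsplit v
        exact ⟨1, by omega⟩
      · rw [deg_eq_zero_of_not_mem Γ hv]
        exact ⟨0, rfl⟩
    have hDy : Γ.deg D y = 1 := by
      have h1 := hsplit y
      obtain ⟨k, hk⟩ := hevD
      omega
    have hyR : Γ.ReachE (S j) x y := hDR y ((deg_pos_iff _ _ _).mp (by omega))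
    have hDsubC' : (S j \ D) ⊆ C := fun e he => hSsub j (Finset.mem_sdiff.mp he).1
    have hCD'ne : (C \ (S j \ D)).Nonempty := by
      obtain ⟨e, he⟩ := hDne
      have heD' : e ∉ S j \ D := fun h => (Finset.mem_sdiff.mp h).2 he
      exact ⟨e, Finset.mem_sdiff.mpr ⟨hSsub j (hDsub he), heD'⟩⟩
    obtain ⟨v', e, f, heD', hfCD', hv1, hv2⟩ := crossing H hconn hDsubC' hD'ne hCD'ne
    rw [map_mem_ends hH] at hv1 hv2
    obtain ⟨u, hue, hphiu⟩ := hv1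
    obtain ⟨w, hwf, hphiw⟩ := hv2
    have heS := (Finset.mem_sdiff.mp heD').1
    have huD' : u ∈ Γ.vertsOf (S j \ D) := (mem_vertsOf_iff _ _ _).mpr ⟨e, heD', hue⟩
    have hunR := hD'R u huD'
    have hux : u ≠ x := fun h => hunR (by rw [h]; exact Relation.ReflTransGen.refl)
    have huy : u ≠ y := fun h => hunR (by rw [h]; exact hyR)
    have hphiu' : Phi x y (part e) u = Sum.inl u := Phi_eq_inl.mpr ⟨rfl, hux, huy⟩
    rw [hphiu'] at hphiu
    rw [← hphiu] at hphiw
    obtain ⟨hwu, -, -⟩ := Phi_eq_inl.mp hphiw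
    have hfC := (Finset.mem_sdiff.mp hfCD').1
    have hfj : part f = j := by
      by_contra hne'
      have hej : part e = j := (hSmem.mp heS).2
      have hef : part e ≠ part f := fun hpe => hne' (by rw [← hpe]; exact hej)
      rcases hsep e f hef u hue (hwu ▸ hwf) with h | h
      · exact hux h
      · exact huy h
    have hfS : f ∈ S j := hSmem.mpr ⟨hfC, hfj⟩
    have hfD : f ∈ D := by
      by_contra hfD
      exact (Finset.mem_sdiff.mp hfCD').2 (Finset.mem_sdiff.mpr ⟨hfS, hfD⟩)
    exact hunR ((Finset.mem_filter.mp hfD).2 u (hwu ▸ hwf))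
  intro j
  obtain ⟨haj, hbj⟩ := h11 j
  have hres : Γ.IsPath (S j) x y :=
    ⟨hxy, hconnS j, (deg_pos_iff Γ (S j) x).mp (by omega), (deg_pos_iff Γ (S j) y).mp (by omega),
      haj, hbj, fun v hv hvx hvy => hint hvx hvy hv⟩
  simpa [hS] using hres

end Main

/-- A fat theta: `Γ` is formed from three pieces sharing only the
two vertices `x, y`, balanced cycles being those within a single piece; `H` is
formed from the pieces by identifying `y` of piece `i` with `x` of piece `i+1`
(to `w i`, indices mod 3).  Then `F(Ω) = M(H)`. -/
theorem fat_theta_frame_eq_cycle (Γ : Multigraph V E) (x y : V) (hxy : x ≠ y)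
    (part : E → Fin 3)
    (hsep : ∀ e f, part e ≠ part f →
      ∀ u : V, u ∈ Γ.ends e → u ∈ Γ.ends f → u = x ∨ u = y)
    (hne : ∀ i : Fin 3, ∃ e, part e = i)
    (B : Set (Finset E))
    (hB : B = {C : Finset E | Γ.IsCycle C ∧ ∃ i, ∀ e ∈ C, part e = i})
    (H : Multigraph (V ⊕ Fin 3) E)
    (hH : ∀ e, H.ends e = Sym2.map
      (fun u => if u = y then Sum.inr (part e)
        else if u = x then Sum.inr (part e - 1) else Sum.inl u) (Γ.ends e)) :
    ∀ C : Finset E, Γ.FrameCircuit B C ↔ H.IsCycle C := by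
  intro C
  constructor
  · exact fun h => frame_to_H hxy hsep hH hB h
  · intro hC
    by_cases hsingle : ∃ i, ∀ e ∈ C, part e = i
    · obtain ⟨i, hi⟩ := hsingle
      exact Or.inl ⟨Hcycle_single_part hxy hH hC hi,
        hB ▸ ⟨Hcycle_single_part hxy hH hC hi, i, hi⟩⟩
    · push_neg at hsingle
      obtain ⟨e₀, he₀⟩ := hC.1
      obtain ⟨f₀, hf₀, hpef⟩ := hsingle (part e₀)
      have hpaths := Hcycle_multi hxy hsep hH hC he₀ hf₀ (Ne.symm hpef)
      right; right; right
      have hdisj : ∀ j k : Fin 3, j ≠ k →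
          Disjoint (C.filter fun e => part e = j) (C.filter fun e => part e = k) := by
        intro j k hjk
        rw [Finset.disjoint_left]
        intro e hej hek
        exact hjk (((Finset.mem_filter.mp hej).2).symm.trans (Finset.mem_filter.mp hek).2)
      have hinter : ∀ j k : Fin 3, j ≠ k →
          Γ.vertsOf (C.filter fun e => part e = j) ∩
            Γ.vertsOf (C.filter fun e => part e = k) = {x, y} := by
        intro j k hjk
        ext v
        rw [Finset.mem_inter]
        constructor
        · rintro ⟨hvj, hvk⟩
          obtain ⟨e, he, hve⟩ := (mem_vertsOf_iff _ _ _).mp hvj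
          obtain ⟨f, hf, hvf⟩ := (mem_vertsOf_iff _ _ _).mp hvk
          have hef : part e ≠ part f := by
            rw [(Finset.mem_filter.mp he).2, (Finset.mem_filter.mp hf).2]
            exact hjk
          rcases hsep e f hef v hve hvf with rfl | rfl
          · exact Finset.mem_insert_self _ _
          · exact Finset.mem_insert_of_mem (Finset.mem_singleton_self _)
        · intro hv
          rcases Finset.mem_insert.mp hv with rfl | hv
          · exact ⟨(hpaths j).2.2.1, (hpaths k).2.2.1⟩
          · rw [Finset.mem_singleton.mp hv]
            exact ⟨(hpaths j).2.2.2.1, (hpaths k).2.2.2.1⟩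
      have hunion : C = (C.filter fun e => part e = 0) ∪ (C.filter fun e => part e = 1) ∪
          (C.filter fun e => part e = 2) := by
        ext e
        constructor
        · intro he
          have hc : ∀ p : Fin 3, p = 0 ∨ p = 1 ∨ p = 2 := by decide
          rcases hc (part e) with h | h | h
          · exact Finset.mem_union_left _
              (Finset.mem_union_left _ (Finset.mem_filter.mpr ⟨he, h⟩))
          · exact Finset.mem_union_left _
              (Finset.mem_union_right _ (Finset.mem_filter.mpr ⟨he, h⟩))
          · exact Finset.mem_union_right _ (Finset.mem_filter.mpr ⟨he, h⟩)
        · intro he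
          rcases Finset.mem_union.mp he with h | h
          · rcases Finset.mem_union.mp h with h' | h' <;>
              exact Finset.filter_subset _ _ h'
          · exact Finset.filter_subset _ _ h
      refine ⟨⟨x, y, _, _, _, ⟨hpaths 0, hpaths 1, hpaths 2,
        hdisj 0 1 (by decide), hdisj 0 2 (by decide), hdisj 1 2 (by decide),
        hinter 0 1 (by decide), hinter 0 2 (by decide), hinter 1 2 (by decide)⟩,
        hunion⟩, ?_⟩
      intro D hDC hDcyc hDB
      rw [hB] at hDB
      obtain ⟨-, i, hi⟩ := hDB
      have hsub : D ⊆ C.filter fun e => part e = i :=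
        fun e he => Finset.mem_filter.mpr ⟨hDC he, hi e he⟩
      exact no_cycle_sub_path Γ (hpaths i) hsub hDcyc
end

section
/- Suppose a signed graph Ω on underlying graph Γ is obtained from a graph H by a 4-twisting, and M(G) = L(Ω) for some graph G. Then the edge set of every cycle of H induces a connected subgraph of Γ. -/
variable {V E : Type} [Fintype V] [DecidableEq V] [Fintype E] [DecidableEq E]



private lemma mem_diag' {α : Type} (a : α) : a ∈ Sym2.diag a := by
  unfold Sym2.diag; exact Sym2.mem_iff.2 (Or.inl rfl)

private lemma mem_diag_iff' {α : Type} {a b : α} : a ∈ Sym2.diag b ↔ a = b := by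
  unfold Sym2.diag; rw [Sym2.mem_iff, or_self]

private lemma sym2_sum_deg {α : Type} [Fintype α] [DecidableEq α] (w : Sym2 α) :
    ∑ s : α, (if w = Sym2.diag s then 2 else if s ∈ w then 1 else 0) = 2 := by
  induction w using Sym2.ind with
  | _ a b =>
    by_cases hab : a = b
    · subst hab
      have key : ∀ s : α, (if s(a, a) = Sym2.diag s then 2 else if s ∈ s(a, a) then 1 else 0)
          = if s = a then 2 else 0 := by
        intro s
        by_cases h : s = a
        · subst h; simp [Sym2.diag]
        · have h1 : s(a, a) ≠ Sym2.diag s := by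
            intro hcon
            have ha : a ∈ Sym2.diag s := hcon ▸ Sym2.mem_iff.2 (Or.inl rfl)
            exact h (mem_diag_iff'.1 ha).symm
          have h2 : s ∉ s(a, a) := by
            rw [Sym2.mem_iff]; rintro (rfl | rfl) <;> exact h rfl
          simp [h1, h2, h]
      rw [Finset.sum_congr rfl fun s _ => key s]
      simp
    · have key : ∀ s : α, (if s(a, b) = Sym2.diag s then 2 else if s ∈ s(a, b) then 1 else 0)
          = (if s = a then 1 else 0) + (if s = b then 1 else 0) := by
        intro s
        have h1 : s(a, b) ≠ Sym2.diag s := by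
          intro hcon
          have ha : a ∈ Sym2.diag s := hcon ▸ Sym2.mem_iff.2 (Or.inl rfl)
          have hb : b ∈ Sym2.diag s := hcon ▸ Sym2.mem_iff.2 (Or.inr rfl)
          exact hab ((mem_diag_iff'.1 ha).trans (mem_diag_iff'.1 hb).symm)
        rw [if_neg h1]
        simp only [Sym2.mem_iff]
        by_cases h2 : s = a <;> by_cases h3 : s = b <;> simp_all
      rw [Finset.sum_congr rfl fun s _ => key s, Finset.sum_add_distrib]
      simp

private lemma deg_handshake {V E : Type} [Fintype V] [DecidableEq V] [Fintype E] [DecidableEq E]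
    (G : Multigraph V E) (D : Finset E) : ∑ s : V, G.deg D s = 2 * D.card := by
  unfold Multigraph.deg
  rw [Finset.sum_comm, Finset.sum_congr rfl fun e _ => sym2_sum_deg (G.ends e)]
  simp [mul_comm]

private lemma pigeon3 {α : Type} {x y z a b c d : α}
    (ha : a = x ∨ a = y ∨ a = z) (hb : b = x ∨ b = y ∨ b = z)
    (hc : c = x ∨ c = y ∨ c = z) (hd : d = x ∨ d = y ∨ d = z)
    (hab : a ≠ b) (hcd : c ≠ d) (hac : a ≠ c) (had : a ≠ d)
    (hbc : b ≠ c) (hbd : b ≠ d) : False := by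
  rcases ha with rfl | rfl | rfl <;> rcases hb with rfl | rfl | rfl <;>
    rcases hc with rfl | rfl | rfl <;> rcases hd with rfl | rfl | rfl <;> simp_all

/-- If a signed graph `Ω` on `Γ` is a 4-twisting of `H` and
`M(G) = L(Ω)` for some graph `G`, then the edge set of every cycle of `H` is
connected in `Γ`. -/
theorem four_twisting_cycles_connected {W : Type} [Fintype W] [DecidableEq W]
    (Γ : Multigraph V E) (x y z : V) (hxy : x ≠ y) (hxz : x ≠ z) (hyz : y ≠ z)
    (part : E → Fin 4)
    (hsep : ∀ e f, part e ≠ part f →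
      ∀ u : V, u ∈ Γ.ends e → u ∈ Γ.ends f → u = x ∨ u = y ∨ u = z)
    (σ : E → ℤˣ)
    (hσ : ∀ e, σ e = if (part e = 0 ∧ x ∈ Γ.ends e) ∨ (part e = 1 ∧ y ∈ Γ.ends e) ∨
        (part e = 2 ∧ z ∈ Γ.ends e) then -1 else 1)
    (H : Multigraph (V ⊕ Fin 4) E)
    (hH : ∀ e, H.ends e = Sym2.map
      (fun u => if u = x then Sum.inr (part e)
        else if u = y then Sum.inr (1 - part e)
        else if u = z then Sum.inr (part e - 2) else Sum.inl u) (Γ.ends e))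
    (G : Multigraph W E)
    (hML : ∀ C : Finset E, Γ.LiftCircuit σ C ↔ G.IsCycle C) :
    ∀ C : Finset E, H.IsCycle C → Γ.ConnectedOn C := by
  intro C hC
  classical
  obtain ⟨hCne, hconnH, hdegC⟩ := hC
  set φ : Fin 4 → V → V ⊕ Fin 4 := fun p u =>
    if u = x then Sum.inr p else if u = y then Sum.inr (1 - p)
    else if u = z then Sum.inr (p - 2) else Sum.inl u with hφdef
  have hH' : ∀ e, H.ends e = Sym2.map (φ (part e)) (Γ.ends e) := by
    intro e; rw [hφdef]; exact hH e
  have hφx : ∀ p, φ p x = Sum.inr p := by intro p; rw [hφdef]; simp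
  have hφo : ∀ p u, u ≠ x → u ≠ y → u ≠ z → φ p u = Sum.inl u := by
    intro p u h1 h2 h3; rw [hφdef]; simp [h1, h2, h3]
  have hdegdef : ∀ (D : Finset E) (s : V ⊕ Fin 4), H.deg D s =
      ∑ g ∈ D, (if H.ends g = Sym2.diag s then 2 else if s ∈ H.ends g then 1 else 0) :=
    fun _ _ => rfl
  -- basic membership lemmas
  have hINL : ∀ e v, Sum.inl v ∈ H.ends e → v ∈ Γ.ends e ∧ v ≠ x ∧ v ≠ y ∧ v ≠ z := by
    intro e v hv
    rw [hH' e, Sym2.mem_map] at hv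
    obtain ⟨u, hu, hphi⟩ := hv
    by_cases h1 : u = x
    · subst h1; rw [hφx] at hphi; simp at hphi
    by_cases h2 : u = y
    · subst h2; rw [hφdef] at hphi; simp [h1] at hphi
    by_cases h3 : u = z
    · subst h3; rw [hφdef] at hphi; simp [h1, h2] at hphi
    · rw [hφo _ u h1 h2 h3] at hphi
      obtain rfl := Sum.inl.inj hphi
      exact ⟨hu, h1, h2, h3⟩
  have hLET : ∀ e i, Sum.inr i ∈ H.ends e →
      ∃ ℓ, ℓ ∈ Γ.ends e ∧ (ℓ = x ∨ ℓ = y ∨ ℓ = z) ∧ φ (part e) ℓ = Sum.inr i := by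
    intro e i hv
    rw [hH' e, Sym2.mem_map] at hv
    obtain ⟨u, hu, hphi⟩ := hv
    by_cases h1 : u = x
    · exact ⟨u, hu, Or.inl h1, hphi⟩
    by_cases h2 : u = y
    · exact ⟨u, hu, Or.inr (Or.inl h2), hphi⟩
    by_cases h3 : u = z
    · exact ⟨u, hu, Or.inr (Or.inr h3), hphi⟩
    · rw [hφo _ u h1 h2 h3] at hphi; simp at hphi
  have hSP : ∀ e f v, v ∈ Γ.ends e → v ∈ Γ.ends f → v ≠ x → v ≠ y → v ≠ z →
      part e = part f := by
    intro e f v hve hvf h1 h2 h3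
    by_contra hne
    rcases hsep e f hne v hve hvf with h | h | h
    · exact h1 h
    · exact h2 h
    · exact h3 h
  -- reachability and the edge relation
  have hRsymm : ∀ u w, Γ.ReachE C u w → Γ.ReachE C w u := by
    intro u w h
    exact (@Relation.ReflTransGen.stdSymm _ _
      ⟨fun a b ⟨e, he, ha, hb⟩ => ⟨e, he, hb, ha⟩⟩).symm _ _ h
  set Rel : E → E → Prop := fun e f =>
    ∃ p q, p ∈ Γ.ends e ∧ q ∈ Γ.ends f ∧ Γ.ReachE C p q with hRelDef
  have hstep1 : ∀ e ∈ C, ∀ p q, p ∈ Γ.ends e → q ∈ Γ.ends e → Γ.ReachE C p q :=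
    fun e he p q hp hq => Relation.ReflTransGen.single ⟨e, he, hp, hq⟩
  have hRelOfMem : ∀ e f v, v ∈ Γ.ends e → v ∈ Γ.ends f → Rel e f :=
    fun e f v hv hv' => ⟨v, v, hv, hv', Relation.ReflTransGen.refl⟩
  have hRelRefl : ∀ e, Rel e e := fun e =>
    ⟨(Γ.ends e).out.1, (Γ.ends e).out.1, Sym2.out_fst_mem _, Sym2.out_fst_mem _,
      Relation.ReflTransGen.refl⟩
  have hRelSymm : ∀ e f, Rel e f → Rel f e := by
    rintro e f ⟨p, q, hp, hq, h⟩
    exact ⟨q, p, hq, hp, hRsymm _ _ h⟩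
  have hRelTrans : ∀ e f g, f ∈ C → Rel e f → Rel f g → Rel e g := by
    rintro e f g hf ⟨p, q, hp, hq, h1⟩ ⟨q', r, hq', hr, h2⟩
    exact ⟨p, r, hp, hr, (h1.trans (hstep1 f hf q q' hq hq')).trans h2⟩
  -- boundary lemma
  have hBND : ∀ g₀ ∈ C, ∀ f₀ ∈ C, ¬ Rel g₀ f₀ →
      ∃ e₁ f₁ i₁, e₁ ∈ C ∧ f₁ ∈ C ∧ Rel g₀ e₁ ∧ ¬ Rel g₀ f₁ ∧
        Sum.inr i₁ ∈ H.ends e₁ ∧ Sum.inr i₁ ∈ H.ends f₁ := by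
    intro g₀ hg₀ f₀ hf₀ hnr
    have hp := Sym2.out_fst_mem (H.ends g₀)
    have hq := Sym2.out_fst_mem (H.ends f₀)
    have hpv : (H.ends g₀).out.1 ∈ H.vertsOf C :=
      Finset.mem_filter.2 ⟨Finset.mem_univ _, g₀, hg₀, hp⟩
    have hqv : (H.ends f₀).out.1 ∈ H.vertsOf C :=
      Finset.mem_filter.2 ⟨Finset.mem_univ _, f₀, hf₀, hq⟩
    have hchain : Relation.ReflTransGen
        (fun a b => ∃ e ∈ C, a ∈ H.ends e ∧ b ∈ H.ends e)
        ((H.ends g₀).out.1) ((H.ends f₀).out.1) := hconnH _ hpv _ hqv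
    have share : ∀ (s : V ⊕ Fin 4) g h, g ∈ C → h ∈ C → s ∈ H.ends g → s ∈ H.ends h →
        Rel g₀ g → ¬ Rel g₀ h →
        ∃ e₁ f₁ i₁, e₁ ∈ C ∧ f₁ ∈ C ∧ Rel g₀ e₁ ∧ ¬ Rel g₀ f₁ ∧
          Sum.inr i₁ ∈ H.ends e₁ ∧ Sum.inr i₁ ∈ H.ends f₁ := by
      intro s g h hg hh hsg hsh hRg hNh
      cases s with
      | inl v =>
        obtain ⟨hvg, -, -, -⟩ := hINL g v hsg
        obtain ⟨hvh, -, -, -⟩ := hINL h v hsh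
        exact absurd (hRelTrans g₀ g h hg hRg (hRelOfMem g h v hvg hvh)) hNh
      | inr i => exact ⟨g, h, i, hg, hh, hRg, hNh, hsg, hsh⟩
    have aux : ∀ p : V ⊕ Fin 4, Relation.ReflTransGen
        (fun a b => ∃ e ∈ C, a ∈ H.ends e ∧ b ∈ H.ends e) p ((H.ends f₀).out.1) →
        ∀ g, g ∈ C → p ∈ H.ends g → Rel g₀ g →
        ∃ e₁ f₁ i₁, e₁ ∈ C ∧ f₁ ∈ C ∧ Rel g₀ e₁ ∧ ¬ Rel g₀ f₁ ∧
          Sum.inr i₁ ∈ H.ends e₁ ∧ Sum.inr i₁ ∈ H.ends f₁ := by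
      intro p hpq
      induction hpq using Relation.ReflTransGen.head_induction_on with
      | refl =>
        intro g hg hpg hRg
        exact share _ g f₀ hg hf₀ hpg hq hRg hnr
      | head hstep htail ih =>
        obtain ⟨m, hmC, ham, hcm⟩ := hstep
        intro g hg hpg hRg
        by_cases hm : Rel g₀ m
        · exact ih m hmC hcm hm
        · exact share _ g m hg hmC hpg ham hRg hm
    exact aux _ hchain g₀ hg₀ hp (hRelRefl g₀)
  -- every class with a complement has two distinct special vertices in Γ
  have hL2 : ∀ g₀ ∈ C, ∀ f₀ ∈ C, ¬ Rel g₀ f₀ →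
      ∃ ℓ ℓ', ℓ ≠ ℓ' ∧ (ℓ = x ∨ ℓ = y ∨ ℓ = z) ∧ (ℓ' = x ∨ ℓ' = y ∨ ℓ' = z) ∧
        (∃ g ∈ C, Rel g₀ g ∧ ℓ ∈ Γ.ends g) ∧ (∃ g ∈ C, Rel g₀ g ∧ ℓ' ∈ Γ.ends g) := by
    intro g₀ hg₀ f₀ hf₀ hnr
    obtain ⟨e₁, f₁, i₁, he₁, hf₁, hRe₁, hNf₁, hie₁, hif₁⟩ := hBND g₀ hg₀ f₀ hf₀ hnr
    obtain ⟨a, haE, haL, haφ⟩ := hLET e₁ i₁ hie₁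
    by_cases hsec : ∃ ℓ', ((ℓ' = x ∨ ℓ' = y ∨ ℓ' = z) ∧
        ∃ g ∈ C, Rel g₀ g ∧ ℓ' ∈ Γ.ends g) ∧ ℓ' ≠ a
    · obtain ⟨ℓ', ⟨hℓ'L, hg'⟩, hne⟩ := hsec
      exact ⟨a, ℓ', Ne.symm hne, haL, hℓ'L, ⟨e₁, he₁, hRe₁, haE⟩, hg'⟩
    · exfalso
      push_neg at hsec
      set D := C.filter (fun g => Rel g₀ g ∧ part g = part e₁) with hD
      have hDC : D ⊆ C := Finset.filter_subset _ _
      have he₁D : e₁ ∈ D := Finset.mem_filter.2 ⟨he₁, hRe₁, rfl⟩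
      have hf₁D : f₁ ∉ D := fun h => hNf₁ (Finset.mem_filter.1 h).2.1
      have hA : ∀ g ∈ D, ∀ j, Sum.inr j ∈ H.ends g → j = i₁ := by
        intro g hgD j hj
        obtain ⟨hgC, hgR, hgp⟩ : g ∈ C ∧ Rel g₀ g ∧ part g = part e₁ := by
          have h := Finset.mem_filter.1 hgD; exact ⟨h.1, h.2⟩
        obtain ⟨ℓ, hℓE, hℓL, hℓφ⟩ := hLET g j hj
        have hla : ℓ = a := hsec ℓ ⟨hℓL, g, hgC, hgR, hℓE⟩
        subst hla
        rw [hgp, haφ] at hℓφ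
        exact (Sum.inr.inj hℓφ).symm
      have hB : ∀ g ∈ C, ∀ v : V, Sum.inl v ∈ H.ends g →
          (∃ g' ∈ D, Sum.inl v ∈ H.ends g') → g ∈ D := by
        rintro g hgC v hvg ⟨g', hg'D, hvg'⟩
        obtain ⟨hg'C, hg'R, hg'p⟩ : g' ∈ C ∧ Rel g₀ g' ∧ part g' = part e₁ := by
          have h := Finset.mem_filter.1 hg'D; exact ⟨h.1, h.2⟩
        obtain ⟨hvΓg, hvx, hvy, hvz⟩ := hINL g v hvg
        obtain ⟨hvΓg', -, -, -⟩ := hINL g' v hvg'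
        refine Finset.mem_filter.2 ⟨hgC, ?_, ?_⟩
        · exact hRelTrans g₀ g' g hg'C hg'R (hRelOfMem g' g v hvΓg' hvΓg)
        · exact (hSP g' g v hvΓg' hvΓg hvx hvy hvz).symm.trans hg'p
      have hEvenInl : ∀ v : V, Even (H.deg D (Sum.inl v)) := by
        intro v
        by_cases hex : ∃ g' ∈ D, Sum.inl v ∈ H.ends g'
        · have hmem : Sum.inl v ∈ H.vertsOf C := by
            obtain ⟨g', hg'D, hv⟩ := hex
            exact Finset.mem_filter.2 ⟨Finset.mem_univ _, g', hDC hg'D, hv⟩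
          have heq : H.deg D (Sum.inl v) = H.deg C (Sum.inl v) := by
            rw [hdegdef, hdegdef]
            refine Finset.sum_subset hDC ?_
            intro g hgC hgD
            by_contra hterm
            have hvg : Sum.inl v ∈ H.ends g := by
              by_cases hd : H.ends g = Sym2.diag (Sum.inl v)
              · rw [hd]; exact mem_diag' _
              · rw [if_neg hd] at hterm
                by_cases hm : Sum.inl v ∈ H.ends g
                · exact hm
                · rw [if_neg hm] at hterm; exact absurd rfl hterm
            exact hgD (hB g hgC v hvg hex)
          rw [heq, hdegC _ hmem]
          exact ⟨1, rfl⟩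
        · have hzero : H.deg D (Sum.inl v) = 0 := by
            rw [hdegdef]
            refine Finset.sum_eq_zero ?_
            intro g hgD
            have hng : Sum.inl v ∉ H.ends g := fun hm => hex ⟨g, hgD, hm⟩
            have hnd : H.ends g ≠ Sym2.diag (Sum.inl v) := by
              intro hd; exact hng (by rw [hd]; exact mem_diag' _)
            rw [if_neg hnd, if_neg hng]
          rw [hzero]; exact Even.zero
      have hInrZero : ∀ j, j ≠ i₁ → H.deg D (Sum.inr j) = 0 := by
        intro j hj
        rw [hdegdef]
        refine Finset.sum_eq_zero ?_
        intro g hgD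
        have hng : Sum.inr j ∉ H.ends g := fun hm => hj (hA g hgD j hm)
        have hnd : H.ends g ≠ Sym2.diag (Sum.inr j) := by
          intro hd; exact hng (by rw [hd]; exact mem_diag' _)
        rw [if_neg hnd, if_neg hng]
      have hdeg2 : H.deg C (Sum.inr i₁) = 2 :=
        hdegC _ (Finset.mem_filter.2 ⟨Finset.mem_univ _, e₁, he₁, hie₁⟩)
      have he₁f₁ : e₁ ≠ f₁ := by rintro rfl; exact hNf₁ hRe₁
      have hD_erase : D ⊆ C.erase f₁ := fun g hg =>
        Finset.mem_erase.2 ⟨fun h => hf₁D (h ▸ hg), hDC hg⟩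
      have hE1 : H.deg D (Sum.inr i₁) = 1 := by
        have hmono : H.deg D (Sum.inr i₁) ≤ H.deg (C.erase f₁) (Sum.inr i₁) := by
          rw [hdegdef, hdegdef]
          exact Finset.sum_le_sum_of_subset hD_erase
        have hsplit : H.deg (C.erase f₁) (Sum.inr i₁) +
            (if H.ends f₁ = Sym2.diag (Sum.inr i₁) then 2
              else if Sum.inr i₁ ∈ H.ends f₁ then 1 else 0) = 2 := by
          rw [hdegdef, Finset.sum_erase_add _ _ hf₁, ← hdegdef]
          exact hdeg2
        have hf₁pos : 1 ≤ (if H.ends f₁ = Sym2.diag (Sum.inr i₁) then 2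
            else if Sum.inr i₁ ∈ H.ends f₁ then 1 else 0) := by
          by_cases hd : H.ends f₁ = Sym2.diag (Sum.inr i₁) <;> simp [hd, hif₁]
        have he₁pos : 1 ≤ H.deg D (Sum.inr i₁) := by
          rw [hdegdef]
          calc 1 ≤ (if H.ends e₁ = Sym2.diag (Sum.inr i₁) then 2
              else if Sum.inr i₁ ∈ H.ends e₁ then 1 else 0) := by
                by_cases hd : H.ends e₁ = Sym2.diag (Sum.inr i₁) <;> simp [hd, hie₁]
            _ ≤ _ := Finset.single_le_sum (f := fun g => if H.ends g = Sym2.diag (Sum.inr i₁) then 2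
                else if Sum.inr i₁ ∈ H.ends g then 1 else 0) (fun i _ => Nat.zero_le _) he₁D
        omega
      have htotal : ∑ s : V ⊕ Fin 4, H.deg D s = 2 * D.card := deg_handshake H D
      have hsplit2 : ∑ s : V ⊕ Fin 4, H.deg D s =
          (∑ v : V, H.deg D (Sum.inl v)) + ∑ j : Fin 4, H.deg D (Sum.inr j) :=
        Fintype.sum_sum_type _
      have hinr : ∑ j : Fin 4, H.deg D (Sum.inr j) = 1 := by
        rw [Finset.sum_eq_single i₁ (fun j _ hj => hInrZero j hj)
          (fun h => absurd (Finset.mem_univ i₁) h)]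
        exact hE1
      have hinlEven : Even (∑ v : V, H.deg D (Sum.inl v)) :=
        Finset.sum_induction _ Even (fun a b ha hb => ha.add hb) Even.zero
          (fun v _ => hEvenInl v)
      obtain ⟨k, hk⟩ := hinlEven
      rw [hsplit2, hinr, hk] at htotal
      omega
  -- all edges of C are related
  have hMAIN : ∀ e ∈ C, ∀ f ∈ C, Rel e f := by
    intro e he f hf
    by_contra hnr
    obtain ⟨ℓ₁, ℓ₂, h12, hLa, hLb, ⟨g1, hg1C, hg1R, hm1⟩, ⟨g2, hg2C, hg2R, hm2⟩⟩ :=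
      hL2 e he f hf hnr
    have hnr' : ¬ Rel f e := fun h => hnr (hRelSymm _ _ h)
    obtain ⟨ℓ₃, ℓ₄, h34, hLc, hLd, ⟨g3, hg3C, hg3R, hm3⟩, ⟨g4, hg4C, hg4R, hm4⟩⟩ :=
      hL2 f hf e he hnr'
    have cross : ∀ ℓ gA gB, gA ∈ C → gB ∈ C → Rel e gA → Rel f gB →
        ℓ ∈ Γ.ends gA → ℓ ∈ Γ.ends gB → False := by
      intro ℓ gA gB hgA hgB hRA hRB hmA hmB
      exact hnr (hRelTrans e gA f hgA hRA
        (hRelTrans gA gB f hgB (hRelOfMem gA gB ℓ hmA hmB) (hRelSymm _ _ hRB)))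
    have h13 : ℓ₁ ≠ ℓ₃ := fun h =>
      cross ℓ₁ g1 g3 hg1C hg3C hg1R hg3R hm1 (by rw [h]; exact hm3)
    have h14 : ℓ₁ ≠ ℓ₄ := fun h =>
      cross ℓ₁ g1 g4 hg1C hg4C hg1R hg4R hm1 (by rw [h]; exact hm4)
    have h23 : ℓ₂ ≠ ℓ₃ := fun h =>
      cross ℓ₂ g2 g3 hg2C hg3C hg2R hg3R hm2 (by rw [h]; exact hm3)
    have h24 : ℓ₂ ≠ ℓ₄ := fun h =>
      cross ℓ₂ g2 g4 hg2C hg4C hg2R hg4R hm2 (by rw [h]; exact hm4)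
    exact pigeon3 hLa hLb hLc hLd h12 h34 h13 h14 h23 h24
  -- conclude connectivity
  intro u hu w hw
  obtain ⟨-, eu, heu, huΓ⟩ := Finset.mem_filter.1 hu
  obtain ⟨-, ew, hew, hwΓ⟩ := Finset.mem_filter.1 hw
  obtain ⟨p, q, hp, hq, hpq⟩ := hMAIN eu heu ew hew
  exact (Relation.ReflTransGen.single ⟨eu, heu, huΓ, hp⟩).trans
    (hpq.trans (Relation.ReflTransGen.single ⟨ew, hew, hq, hwΓ⟩))
end
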